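/- arXiv:1212.3973 — 3 statements merged into one kernel-verified Lean document; each statement's English description precedes it below -/
import Mathlib

section
/- For every n ≥ 0, the tail probabilities and hitting probabilities of the pattern A satisfy the renewal-type identity q_n · P(A) = Σ_{k=1}^{l} [A_(k) = A^(k)] · P(A^(l−k)) · p_{n+k}. -/
open MeasureTheory ENNReal

noncomputable section

/-- Probability of a single toss outcome: `true` (heads) has probability `p`,
`false` (tails) has probability `1 - p`. -/
def letterP (p : ℝ) (b : Bool) : ℝ := if b then p else 1 - p

/-- Probability of a finite string of tosses (`1` for the empty string). -/
def strP (p : ℝ) (A : List Bool) : ℝ := (A.map (letterP p)).prod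

/-- `μ` is the product measure on `{H,T}^ℕ` of i.i.d. coin tosses with heads
probability `p`: every cylinder set has the product probability. -/
def IsCoinMeasure (p : ℝ) (μ : Measure (ℕ → Bool)) : Prop :=
  ∀ (n : ℕ) (a : Fin n → Bool),
    μ {ξ | ∀ i : Fin n, ξ i = a i} = ENNReal.ofReal (∏ i, letterP p (a i))

/-- The pattern `A` (of length `l`) occurs ending exactly at toss `n`
(toss number `k ≥ 1` of `ξ` is `ξ (k - 1)`): `n ≥ l` and tosses
`n - l + 1, …, n` spell `A`. -/
def occursAt (A : List Bool) (ξ : ℕ → Bool) (n : ℕ) : Prop :=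
  A.length ≤ n ∧ (List.ofFn fun k : Fin A.length => ξ (n - A.length + k)) = A

/-- The first toss at which the pattern `A` has occurred (`⊤` if it never occurs). -/
def hitTime (A : List Bool) (ξ : ℕ → Bool) : ℕ∞ :=
  ⨅ (n : ℕ) (_ : occursAt A ξ n), (n : ℕ∞)

/-! ### Auxiliary lemmas -/

lemma letterP_nonneg {p : ℝ} (hp0 : 0 ≤ p) (hp1 : p ≤ 1) (b : Bool) : 0 ≤ letterP p b := by
  cases b <;> simp [letterP] <;> linarith

lemma strP_nonneg {p : ℝ} (hp0 : 0 ≤ p) (hp1 : p ≤ 1) (A : List Bool) : 0 ≤ strP p A := by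
  induction A with
  | nil => simp [strP]
  | cons a A ih => simpa [strP] using mul_nonneg (letterP_nonneg hp0 hp1 a) ih

lemma strP_eq (p : ℝ) (A : List Bool) : strP p A = ∏ i : Fin A.length, letterP p (A.get i) := by
  conv_lhs => rw [show A = List.ofFn A.get from (List.ofFn_get A).symm]
  rw [strP, List.map_ofFn, List.prod_ofFn]
  rfl

lemma ofFn_eq_iff {A : List Bool} {f : Fin A.length → Bool} :
    List.ofFn f = A ↔ ∀ i, f i = A.get i := by
  constructor
  · intro h
    have : f = A.get := List.ofFn_inj.mp (h.trans (List.ofFn_get A).symm)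
    exact fun i => congrFun this i
  · intro h
    have : f = A.get := funext h
    rw [this]; exact List.ofFn_get A

lemma occursAt_iff {A : List Bool} {ξ : ℕ → Bool} {m : ℕ} :
    occursAt A ξ m ↔ A.length ≤ m ∧ ∀ i : Fin A.length, ξ (m - A.length + i) = A.get i := by
  unfold occursAt
  rw [and_congr_right_iff]
  intro _
  exact ofFn_eq_iff

lemma occursAt_congr {A : List Bool} {ξ ξ' : ℕ → Bool} {m M : ℕ}
    (h : ∀ i < M, ξ i = ξ' i) (hm : m ≤ M) : (occursAt A ξ m ↔ occursAt A ξ' m) := by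
  rw [occursAt_iff, occursAt_iff, and_congr_right_iff]
  intro hl
  apply forall_congr'
  intro i
  rw [h _ (by omega : m - A.length + (i : ℕ) < M)]

lemma hitTime_le {A : List Bool} {ξ : ℕ → Bool} {m : ℕ} (h : occursAt A ξ m) :
    hitTime A ξ ≤ m := by
  exact iInf₂_le m h

lemma lt_hitTime_iff {A : List Bool} {ξ : ℕ → Bool} {n : ℕ} :
    (n : ℕ∞) < hitTime A ξ ↔ ∀ m, occursAt A ξ m → n < m := by
  constructor
  · intro h m hm
    by_contra h'
    push_neg at h'
    have : hitTime A ξ ≤ (n : ℕ∞) := (hitTime_le hm).trans (by exact_mod_cast h')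
    exact absurd (lt_of_lt_of_le h this) (lt_irrefl _)
  · intro h
    have h1 : ((n + 1 : ℕ) : ℕ∞) ≤ hitTime A ξ :=
      le_iInf fun m => le_iInf fun hm => by exact_mod_cast h m hm
    calc (n : ℕ∞) < ((n + 1 : ℕ) : ℕ∞) := by exact_mod_cast Nat.lt_succ_self n
      _ ≤ _ := h1

lemma hitTime_eq_iff {A : List Bool} {ξ : ℕ → Bool} {m : ℕ} :
    hitTime A ξ = (m : ℕ∞) ↔ occursAt A ξ m ∧ ∀ m' < m, ¬ occursAt A ξ m' := by
  constructor
  · intro h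
    have h2 : ∀ m' < m, ¬ occursAt A ξ m' := by
      intro m' hm' hocc
      have := hitTime_le hocc
      rw [h] at this
      exact absurd (by exact_mod_cast this : m ≤ m') (by omega)
    refine ⟨?_, h2⟩
    by_contra hocc
    have : (m : ℕ∞) < hitTime A ξ := by
      rw [lt_hitTime_iff]
      intro m' hm'
      by_contra hle
      push_neg at hle
      rcases lt_or_eq_of_le hle with h' | h'
      · exact h2 m' h' hm'
      · exact hocc (h' ▸ hm')
    rw [h] at this; exact absurd this (lt_irrefl _)
  · rintro ⟨h1, h2⟩
    refine le_antisymm (hitTime_le h1) ?_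
    refine le_iInf fun m' => le_iInf fun hm' => ?_
    have : m ≤ m' := by by_contra h'; push_neg at h'; exact h2 m' h' hm'
    exact_mod_cast this

lemma lt_hitTime_congr {A : List Bool} {ξ ξ' : ℕ → Bool} {n : ℕ}
    (h : ∀ i < n, ξ i = ξ' i) :
    ((n : ℕ∞) < hitTime A ξ ↔ (n : ℕ∞) < hitTime A ξ') := by
  rw [lt_hitTime_iff, lt_hitTime_iff]
  constructor
  · intro H m hm
    by_contra hc
    push_neg at hc
    exact absurd (H m ((occursAt_congr h hc).mpr hm)) (by omega)
  · intro H m hm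
    by_contra hc
    push_neg at hc
    exact absurd (H m ((occursAt_congr h hc).mp hm)) (by omega)

lemma hitTime_eq_congr {A : List Bool} {ξ ξ' : ℕ → Bool} {m : ℕ}
    (h : ∀ i < m, ξ i = ξ' i) :
    (hitTime A ξ = (m : ℕ∞) ↔ hitTime A ξ' = (m : ℕ∞)) := by
  rw [hitTime_eq_iff, hitTime_eq_iff]
  constructor
  · rintro ⟨h1, h2⟩
    exact ⟨(occursAt_congr h le_rfl).mp h1,
      fun m' hm' ho => h2 m' hm' ((occursAt_congr h hm'.le).mpr ho)⟩
  · rintro ⟨h1, h2⟩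
    exact ⟨(occursAt_congr h le_rfl).mpr h1,
      fun m' hm' ho => h2 m' hm' ((occursAt_congr h hm'.le).mp ho)⟩

/-- Extend a finite word to an infinite sequence (padding with `false`). -/
def patch (N : ℕ) (b : Fin N → Bool) : ℕ → Bool := fun i => if h : i < N then b ⟨i, h⟩ else false

lemma exists_finset_lt (A : List Bool) (n : ℕ) :
    ∃ S : Finset (Fin n → Bool),
      {ξ : ℕ → Bool | (n : ℕ∞) < hitTime A ξ} = {ξ | (fun i : Fin n => ξ i) ∈ S} := by
  classical
  refine ⟨Finset.univ.filter (fun b => (n : ℕ∞) < hitTime A (patch n b)), ?_⟩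
  ext ξ
  simp only [Set.mem_setOf_eq, Finset.mem_filter, Finset.mem_univ, true_and]
  apply lt_hitTime_congr
  intro i hi
  simp [patch, hi]

lemma exists_finset_eq (A : List Bool) (m : ℕ) :
    ∃ S : Finset (Fin m → Bool),
      {ξ : ℕ → Bool | hitTime A ξ = (m : ℕ∞)} = {ξ | (fun i : Fin m => ξ i) ∈ S} := by
  classical
  refine ⟨Finset.univ.filter (fun b => hitTime A (patch m b) = (m : ℕ∞)), ?_⟩
  ext ξ
  simp only [Set.mem_setOf_eq, Finset.mem_filter, Finset.mem_univ, true_and]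
  apply hitTime_eq_congr
  intro i hi
  simp [patch, hi]

lemma measurable_cyl (N : ℕ) (a : Fin N → Bool) :
    MeasurableSet {ξ : ℕ → Bool | ∀ i : Fin N, ξ i = a i} := by
  have : {ξ : ℕ → Bool | ∀ i : Fin N, ξ i = a i}
      = ⋂ i : Fin N, (fun ξ : ℕ → Bool => ξ i) ⁻¹' {a i} := by
    ext ξ; simp
  rw [this]
  exact MeasurableSet.iInter fun i => (measurable_pi_apply (i : ℕ)) (measurableSet_singleton _)

lemma measurable_cylAt (N r : ℕ) (w : Fin r → Bool) :
    MeasurableSet {ξ : ℕ → Bool | ∀ j : Fin r, ξ (N + j) = w j} := by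
  have : {ξ : ℕ → Bool | ∀ j : Fin r, ξ (N + j) = w j}
      = ⋂ j : Fin r, (fun ξ : ℕ → Bool => ξ (N + j)) ⁻¹' {w j} := by
    ext ξ; simp
  rw [this]
  exact MeasurableSet.iInter fun j => (measurable_pi_apply (N + j : ℕ)) (measurableSet_singleton _)

lemma measurable_ES (N : ℕ) (S : Finset (Fin N → Bool)) :
    MeasurableSet {ξ : ℕ → Bool | (fun i : Fin N => ξ i) ∈ S} := by
  have : {ξ : ℕ → Bool | (fun i : Fin N => ξ i) ∈ S}
      = ⋃ b ∈ S, {ξ : ℕ → Bool | ∀ i : Fin N, ξ i = b i} := by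
    ext ξ
    simp only [Set.mem_setOf_eq, Set.mem_iUnion]
    constructor
    · intro h; exact ⟨_, h, fun i => rfl⟩
    · rintro ⟨b, hb, h⟩
      have : (fun i : Fin N => ξ i) = b := funext h
      rwa [this]
  rw [this]
  exact (S.measurableSet_biUnion fun b _ => measurable_cyl N b)

lemma measure_ES {p : ℝ} {μ : Measure (ℕ → Bool)} (hμ : IsCoinMeasure p μ)
    (N : ℕ) (S : Finset (Fin N → Bool)) :
    μ {ξ : ℕ → Bool | (fun i : Fin N => ξ i) ∈ S}
      = ∑ b ∈ S, ENNReal.ofReal (∏ i, letterP p (b i)) := by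
  have hset : {ξ : ℕ → Bool | (fun i : Fin N => ξ i) ∈ S}
      = ⋃ b ∈ S, {ξ : ℕ → Bool | ∀ i : Fin N, ξ i = b i} := by
    ext ξ
    simp only [Set.mem_setOf_eq, Set.mem_iUnion]
    constructor
    · intro h; exact ⟨_, h, fun i => rfl⟩
    · rintro ⟨b, hb, h⟩
      have : (fun i : Fin N => ξ i) = b := funext h
      rwa [this]
  rw [hset, measure_biUnion_finset]
  · exact Finset.sum_congr rfl fun b _ => hμ N b
  · intro b hb b' hb' hbb'
    simp only [Function.onFun]
    apply Set.disjoint_left.mpr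
    intro ξ h1 h2
    exact hbb' (funext fun i => (h1 i).symm.trans (h2 i))
  · exact fun b _ => measurable_cyl N b

lemma coin_indep {p : ℝ} (hp0 : 0 ≤ p) (hp1 : p ≤ 1) {μ : Measure (ℕ → Bool)}
    (hμ : IsCoinMeasure p μ) (N r : ℕ) (S : Finset (Fin N → Bool)) (w : Fin r → Bool) :
    μ ({ξ : ℕ → Bool | (fun i : Fin N => ξ i) ∈ S} ∩ {ξ | ∀ j : Fin r, ξ (N + j) = w j})
      = μ {ξ : ℕ → Bool | (fun i : Fin N => ξ i) ∈ S}
        * ENNReal.ofReal (∏ j, letterP p (w j)) := by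
  classical
  have hset : {ξ : ℕ → Bool | (fun i : Fin N => ξ i) ∈ S} ∩ {ξ | ∀ j : Fin r, ξ (N + j) = w j}
      = {ξ : ℕ → Bool | (fun i : Fin (N + r) => ξ i) ∈ S.image (fun b => Fin.append b w)} := by
    ext ξ
    simp only [Set.mem_inter_iff, Set.mem_setOf_eq, Finset.mem_image]
    constructor
    · rintro ⟨h1, h2⟩
      refine ⟨fun i : Fin N => ξ i, h1, ?_⟩
      funext i
      refine Fin.addCases (fun i0 => ?_) (fun j => ?_) i
      · rw [Fin.append_left]; simp [Fin.coe_castAdd]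
      · rw [Fin.append_right]; rw [← h2 j]; simp [Fin.coe_natAdd]
    · rintro ⟨b, hb, h⟩
      have hl : ∀ i0 : Fin N, ξ i0 = b i0 := by
        intro i0
        have := congrFun h (Fin.castAdd r i0)
        rw [Fin.append_left, Fin.coe_castAdd] at this; exact this.symm
      have hr : ∀ j : Fin r, ξ (N + j) = w j := by
        intro j
        have := congrFun h (Fin.natAdd N j)
        rw [Fin.append_right, Fin.coe_natAdd] at this; exact this.symm
      exact ⟨by rw [funext hl]; exact hb, hr⟩
  rw [hset, measure_ES hμ, measure_ES hμ, Finset.sum_image, Finset.sum_mul]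
  · apply Finset.sum_congr rfl
    intro b _
    rw [← ENNReal.ofReal_mul (Finset.prod_nonneg fun i _ => letterP_nonneg hp0 hp1 _)]
    congr 1
    rw [Fin.prod_univ_add]
    congr 1
    · exact Finset.prod_congr rfl fun i _ => by rw [Fin.append_left]
    · exact Finset.prod_congr rfl fun j _ => by rw [Fin.append_right]
  · intro b _ b' _ h
    funext i0
    have := congrFun h (Fin.castAdd r i0)
    beta_reduce at this
    rwa [Fin.append_left, Fin.append_left] at this

/-- For every `n ≥ 0`, the tail probabilities `q_n = μ(τ_A > n)`
and hitting probabilities `p_n = μ(τ_A = n)` of the pattern `A` satisfy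
`q_n ⬝ P(A) = Σ_{k=1}^{l} [A_(k) = A^(k)] ⬝ P(A^(l−k)) ⬝ p_{n+k}`. -/
theorem renewal_identity (p : ℝ) (hp0 : 0 < p) (hp1 : p < 1)
    (μ : Measure (ℕ → Bool)) [IsProbabilityMeasure μ] (hμ : IsCoinMeasure p μ)
    (A : List Bool) (hA : 1 ≤ A.length) (n : ℕ) :
    (μ {ξ | (n : ℕ∞) < hitTime A ξ}).toReal * strP p A =
      ∑ k ∈ Finset.Icc 1 A.length,
        (if A.take k = A.drop (A.length - k) then (1 : ℝ) else 0) *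
          strP p (A.drop k) *
          (μ {ξ | hitTime A ξ = ((n + k : ℕ) : ℕ∞)}).toReal := by
  classical
  have hp0' : (0 : ℝ) ≤ p := hp0.le
  have hp1' : p ≤ 1 := hp1.le
  obtain ⟨ST, hST⟩ := exists_finset_lt A n
  -- Step 1: independence for the tail event
  have key1 : μ ({ξ | (n : ℕ∞) < hitTime A ξ} ∩
        {ξ | ∀ j : Fin A.length, ξ (n + j) = A.get j})
      = μ {ξ | (n : ℕ∞) < hitTime A ξ} * ENNReal.ofReal (strP p A) := by
    rw [hST, strP_eq]
    exact coin_indep hp0' hp1' hμ n A.length ST A.get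
  -- Step 2: independence for each hitting event
  have key2 : ∀ k, μ ({ξ | hitTime A ξ = ((n + k : ℕ) : ℕ∞)} ∩
        {ξ | ∀ j : Fin (A.drop k).length, ξ (n + k + j) = (A.drop k).get j})
      = μ {ξ | hitTime A ξ = ((n + k : ℕ) : ℕ∞)} * ENNReal.ofReal (strP p (A.drop k)) := by
    intro k
    obtain ⟨S, hS⟩ := exists_finset_eq A (n + k)
    rw [hS, strP_eq]
    exact coin_indep hp0' hp1' hμ (n + k) (A.drop k).length S (A.drop k).get
  -- Step 3: the decomposition of the event
  have hsplit : {ξ : ℕ → Bool | (n : ℕ∞) < hitTime A ξ} ∩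
        {ξ | ∀ j : Fin A.length, ξ (n + j) = A.get j}
      = ⋃ k ∈ Finset.filter (fun k => A.take k = A.drop (A.length - k)) (Finset.Icc 1 A.length),
          ({ξ : ℕ → Bool | hitTime A ξ = ((n + k : ℕ) : ℕ∞)} ∩
           {ξ | ∀ j : Fin (A.drop k).length, ξ (n + k + j) = (A.drop k).get j}) := by
    ext ξ
    simp only [Set.mem_inter_iff, Set.mem_setOf_eq, Set.mem_iUnion, Finset.mem_filter,
      Finset.mem_Icc, exists_prop]
    constructor
    · rintro ⟨h1, h2⟩
      have hocc : occursAt A ξ (n + A.length) := by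
        rw [occursAt_iff]
        refine ⟨by omega, fun i => ?_⟩
        rw [Nat.add_sub_cancel]
        exact h2 i
      have hle := hitTime_le hocc
      have hne : hitTime A ξ ≠ ⊤ := by
        intro hT
        rw [hT, top_le_iff] at hle
        exact ENat.coe_ne_top _ hle
      obtain ⟨m, hm0⟩ := WithTop.ne_top_iff_exists.mp hne
      have hm : hitTime A ξ = ((m : ℕ) : ℕ∞) := by exact_mod_cast hm0.symm
      have hnm : n < m := by
        have := h1; rw [hm] at this; exact_mod_cast this
      have hml : m ≤ n + A.length := by
        have := hle; rw [hm] at this; exact_mod_cast this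
      obtain ⟨k, hk1, hk2, rfl⟩ : ∃ k, 1 ≤ k ∧ k ≤ A.length ∧ m = n + k :=
        ⟨m - n, by omega, by omega, by omega⟩
      have hEq : hitTime A ξ = ((n + k : ℕ) : ℕ∞) := hm
      obtain ⟨hlen2, hpt⟩ := occursAt_iff.mp (hitTime_eq_iff.mp hEq).1
      refine ⟨k, ⟨⟨hk1, hk2⟩, ?_⟩, hEq, ?_⟩
      · -- A.take k = A.drop (A.length - k)
        apply List.ext_getElem
        · simp; omega
        · intro i hi1 hi2
          have hik : i < k := by simp at hi1; omega
          simp only [List.getElem_take, List.getElem_drop]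
          have e1 : ξ (n + i) = A.get ⟨i, by omega⟩ := h2 ⟨i, by omega⟩
          have e2 : ξ (n + i) = A.get ⟨A.length - k + i, by omega⟩ := by
            have := hpt ⟨A.length - k + i, by omega⟩
            simpa [show n + k - A.length + (A.length - k + i) = n + i by omega] using this
          have := e1.symm.trans e2
          simpa using this
      · intro j
        have hj : (j : ℕ) < A.length - k := by
          have := j.2; simpa using this
        have e := h2 ⟨k + j, by omega⟩
        simp only [List.get_eq_getElem, List.getElem_drop]
        rw [show n + k + (j : ℕ) = n + (k + (j : ℕ)) by omega]
        simpa using e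
    · rintro ⟨k, ⟨⟨hk1, hk2⟩, hmatch⟩, hDk, hCk⟩
      obtain ⟨hlen2, hpt⟩ := occursAt_iff.mp (hitTime_eq_iff.mp hDk).1
      constructor
      · rw [hDk]
        exact_mod_cast (by omega : n < n + k)
      · intro j
        by_cases hjk : (j : ℕ) < k
        · have e2 : ξ (n + (j : ℕ)) = A.get ⟨A.length - k + (j : ℕ), by omega⟩ := by
            have := hpt ⟨A.length - k + (j : ℕ), by omega⟩
            simpa [show n + k - A.length + (A.length - k + (j : ℕ)) = n + (j : ℕ) by omega]
              using this
          have e3 : A[(j : ℕ)]'(by omega) = A[A.length - k + (j : ℕ)]'(by omega) := by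
            have h4 := List.getElem_of_eq hmatch (i := (j : ℕ))
              (by simp; omega)
            simpa using h4
          simp only [List.get_eq_getElem] at e2 ⊢
          rw [e3]
          exact e2
        · have hjl := j.2
          have e := hCk ⟨(j : ℕ) - k, by simp; omega⟩
          simp only [List.get_eq_getElem, List.getElem_drop] at e ⊢
          simp only [Nat.add_sub_cancel' (not_lt.mp hjk)] at e
          rw [show n + k + ((j : ℕ) - k) = n + (j : ℕ) by omega] at e
          exact e
  -- Step 4: measure of the disjoint union
  have hmeasD : ∀ k : ℕ, MeasurableSet ({ξ : ℕ → Bool | hitTime A ξ = ((n + k : ℕ) : ℕ∞)} ∩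
      {ξ | ∀ j : Fin (A.drop k).length, ξ (n + k + j) = (A.drop k).get j}) := by
    intro k
    obtain ⟨S, hS⟩ := exists_finset_eq A (n + k)
    rw [hS]
    exact (measurable_ES (n + k) S).inter (measurable_cylAt (n + k) (A.drop k).length _)
  have hmain : μ ({ξ : ℕ → Bool | (n : ℕ∞) < hitTime A ξ} ∩
        {ξ | ∀ j : Fin A.length, ξ (n + j) = A.get j})
      = ∑ k ∈ Finset.filter (fun k => A.take k = A.drop (A.length - k)) (Finset.Icc 1 A.length),
          μ ({ξ : ℕ → Bool | hitTime A ξ = ((n + k : ℕ) : ℕ∞)} ∩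
             {ξ | ∀ j : Fin (A.drop k).length, ξ (n + k + j) = (A.drop k).get j}) := by
    rw [hsplit]
    apply measure_biUnion_finset
    · intro k hk k' hk' hkk'
      simp only [Function.onFun]
      apply Set.disjoint_left.mpr
      rintro ξ ⟨hd1, -⟩ ⟨hd2, -⟩
      apply hkk'
      have : ((n + k : ℕ) : ℕ∞) = ((n + k' : ℕ) : ℕ∞) := hd1.symm.trans hd2
      have : n + k = n + k' := by exact_mod_cast this
      omega
    · exact fun k _ => hmeasD k
  -- Step 5: pass to real numbers and conclude
  have hfin : ∀ k : ℕ, μ {ξ : ℕ → Bool | hitTime A ξ = ((n + k : ℕ) : ℕ∞)} ≠ ⊤ :=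
    fun k => measure_ne_top μ _
  calc (μ {ξ | (n : ℕ∞) < hitTime A ξ}).toReal * strP p A
      = (μ {ξ | (n : ℕ∞) < hitTime A ξ} * ENNReal.ofReal (strP p A)).toReal := by
        rw [ENNReal.toReal_mul, ENNReal.toReal_ofReal (strP_nonneg hp0' hp1' A)]
    _ = (μ ({ξ : ℕ → Bool | (n : ℕ∞) < hitTime A ξ} ∩
          {ξ | ∀ j : Fin A.length, ξ (n + j) = A.get j})).toReal := by rw [key1]
    _ = ∑ k ∈ Finset.filter (fun k => A.take k = A.drop (A.length - k)) (Finset.Icc 1 A.length),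
          (μ ({ξ : ℕ → Bool | hitTime A ξ = ((n + k : ℕ) : ℕ∞)} ∩
             {ξ | ∀ j : Fin (A.drop k).length, ξ (n + k + j) = (A.drop k).get j})).toReal := by
        rw [hmain]
        exact ENNReal.toReal_sum fun k _ => measure_ne_top μ _
    _ = ∑ k ∈ Finset.filter (fun k => A.take k = A.drop (A.length - k)) (Finset.Icc 1 A.length),
          strP p (A.drop k) * (μ {ξ : ℕ → Bool | hitTime A ξ = ((n + k : ℕ) : ℕ∞)}).toReal := by
        apply Finset.sum_congr rfl
        intro k hk
        rw [key2 k, ENNReal.toReal_mul, ENNReal.toReal_ofReal (strP_nonneg hp0' hp1' _),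
          mul_comm]
    _ = ∑ k ∈ Finset.Icc 1 A.length,
          (if A.take k = A.drop (A.length - k) then (1 : ℝ) else 0) *
            strP p (A.drop k) *
            (μ {ξ | hitTime A ξ = ((n + k : ℕ) : ℕ∞)}).toReal := by
        rw [Finset.sum_filter]
        apply Finset.sum_congr rfl
        intro k _
        by_cases hk : A.take k = A.drop (A.length - k) <;> simp [hk, mul_assoc]
end
end

section
/- For every s ∈ [−1,1], the probability generating function g_{τ_A}(s) = Σ_{n≥0} p_n s^n satisfies the identity g_{τ_A}(s) · ( P(A) s^l + (1 − s) Σ_{k=1}^{l} [A_(k) = A^(k)] P(A^(l−k)) s^{l−k} ) = P(A) s^l. In particular, wherever the second factor is nonzero, g_{τ_A}(s) = P(A) s^l / ( P(A) s^l + (1 − s) Σ_{k=1}^{l} [A_(k) = A^(k)] P(A^(l−k)) s^{l−k} ). -/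
open MeasureTheory ENNReal

noncomputable section

/-- The correlation polynomial
`w_A^B(s) = Σ_{k=1}^{min(|A|,|B|)} [A_(k) = B^(k)] P(A^(|A|-k)) s^(|A|-k)`,
where `A_(k)` is the prefix of length `k` of `A` and `B^(k)` is the suffix of
length `k` of `B`. -/
def corrW (p : ℝ) (A B : List Bool) (s : ℝ) : ℝ :=
  ∑ k ∈ Finset.Icc 1 (min A.length B.length),
    (if A.take k = B.drop (B.length - k) then (1 : ℝ) else 0) *
      strP p (A.drop k) * s ^ (A.length - k)


namespace CoinPf

variable {p : ℝ}

lemma letterP_nonneg (hp0 : 0 < p) (hp1 : p < 1) (b : Bool) : 0 ≤ letterP p b := by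
  cases b <;> simp [letterP] <;> linarith

lemma letterP_le_one (hp0 : 0 < p) (hp1 : p < 1) (b : Bool) : letterP p b ≤ 1 := by
  cases b <;> simp [letterP] <;> linarith

lemma strP_nonneg (hp0 : 0 < p) (hp1 : p < 1) (w : List Bool) : 0 ≤ strP p w := by
  induction w with
  | nil => simp [strP]
  | cons a t ih =>
    simp only [strP, List.map_cons, List.prod_cons]
    exact mul_nonneg (letterP_nonneg hp0 hp1 a) ih

lemma strP_le_one (hp0 : 0 < p) (hp1 : p < 1) (w : List Bool) : strP p w ≤ 1 := by
  induction w with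
  | nil => simp [strP]
  | cons a t ih =>
    simp only [strP, List.map_cons, List.prod_cons]
    calc letterP p a * (t.map (letterP p)).prod ≤ 1 * 1 := by
          apply mul_le_mul (letterP_le_one hp0 hp1 a) ih (strP_nonneg hp0 hp1 t) zero_le_one
      _ = 1 := one_mul 1

lemma strP_append (w u : List Bool) : strP p (w ++ u) = strP p w * strP p u := by
  simp [strP]

lemma strP_singleton_sum (w : List Bool) :
    strP p (w ++ [true]) + strP p (w ++ [false]) = strP p w := by
  simp [strP_append, strP, letterP]; ring

/-- cylinder: coordinates `start, start+1, …` spell `u`. -/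
def Cyl (start : ℕ) (u : List Bool) : Set (ℕ → Bool) :=
  {ξ | ∀ i : Fin u.length, ξ (start + i) = u.get i}

lemma measurableSet_Cyl (start : ℕ) (u : List Bool) : MeasurableSet (Cyl start u) := by
  have : Cyl start u = ⋂ i : Fin u.length, (fun ξ : ℕ → Bool => ξ (start + i)) ⁻¹' {u.get i} := by
    ext ξ; simp [Cyl]
  rw [this]
  exact MeasurableSet.iInter fun i => (measurable_pi_apply _) (measurableSet_singleton _)

variable {μ : Measure (ℕ → Bool)} [IsProbabilityMeasure μ]

lemma prod_get_eq_strP (w : List Bool) :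
    (∏ i : Fin w.length, letterP p (w.get i)) = strP p w := by
  rw [strP]
  conv_rhs => rw [← List.ofFn_get w]
  rw [List.map_ofFn, List.prod_ofFn]
  rfl

lemma mu_Cyl0 (hμ : IsCoinMeasure p μ) (w : List Bool) : μ (Cyl 0 w) = ENNReal.ofReal (strP p w) := by
  have h := hμ w.length w.get
  rw [← prod_get_eq_strP]
  rw [← h]
  congr 1
  ext ξ
  simp [Cyl]



lemma Cyl_disjoint {w₁ w₂ : List Bool} (hl : w₁.length = w₂.length) (hne : w₁ ≠ w₂) :
    Disjoint (Cyl 0 w₁) (Cyl 0 w₂) := by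
  rw [Set.disjoint_left]
  intro ξ h1 h2
  apply hne
  apply List.ext_get hl
  intro i hi1 hi2
  have e1 := h1 ⟨i, hi1⟩
  have e2 := h2 ⟨i, hi2⟩
  simp only [zero_add] at e1 e2
  rw [← e1, ← e2]

lemma mu_biUnion (hp0 : 0 < p) (hp1 : p < 1) (hμ : IsCoinMeasure p μ)
    (E : Finset (List Bool)) (m : ℕ) (hE : ∀ w ∈ E, w.length = m) :
    μ (⋃ w ∈ E, Cyl 0 w) = ENNReal.ofReal (∑ w ∈ E, strP p w) := by
  rw [measure_biUnion_finset ?hd (fun w _ => measurableSet_Cyl 0 w),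
    ENNReal.ofReal_sum_of_nonneg (fun w _ => strP_nonneg hp0 hp1 w)]
  · exact Finset.sum_congr rfl fun w _ => mu_Cyl0 hμ w
  case hd =>
    intro w₁ h1 w₂ h2 hne
    exact Cyl_disjoint ((hE w₁ h1).trans (hE w₂ h2).symm) hne

lemma Cyl_append (w u : List Bool) : Cyl 0 w ∩ Cyl w.length u = Cyl 0 (w ++ u) := by
  ext ξ
  simp only [Set.mem_inter_iff, Cyl, Set.mem_setOf_eq, zero_add, List.get_eq_getElem]
  constructor
  · rintro ⟨h1, h2⟩ ⟨i, hi⟩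
    simp only []
    rcases Nat.lt_or_ge i w.length with hlt | hge
    · rw [List.getElem_append_left hlt]
      exact h1 ⟨i, hlt⟩
    · have hi2 : i - w.length < u.length := by
        simp only [List.length_append] at hi; omega
      rw [List.getElem_append_right hge]
      have := h2 ⟨i - w.length, hi2⟩
      simpa [Nat.add_sub_cancel' hge] using this
  · intro h
    constructor
    · rintro ⟨i, hi⟩
      have hi' : i < (w ++ u).length := by simp [List.length_append]; omega
      have := h ⟨i, hi'⟩
      simpa [List.getElem_append_left hi] using this
    · rintro ⟨i, hi⟩
      have hi' : w.length + i < (w ++ u).length := by simp [List.length_append]; omega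
      have := h ⟨w.length + i, hi'⟩
      simp only [Fin.val_mk] at this
      rw [List.getElem_append_right (by omega)] at this
      simpa using this

lemma mem_Cyl_singleton {start : ℕ} {b : Bool} {ξ : ℕ → Bool} :
    ξ ∈ Cyl start [b] ↔ ξ start = b := by
  constructor
  · intro h
    have := h ⟨0, by simp⟩
    simpa using this
  · intro h i
    have hi : (i : ℕ) = 0 := by
      have := i.2
      simp only [List.length_singleton] at this
      omega
    simp [hi, h]

/-- one-step refinement of a cylinder set -/
lemma Cyl_split (w : List Bool) :
    Cyl 0 w = Cyl 0 (w ++ [true]) ∪ Cyl 0 (w ++ [false]) := by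
  have hsp : ∀ b : Bool, Cyl 0 (w ++ [b]) = Cyl 0 w ∩ Cyl w.length [b] := by
    intro b; rw [Cyl_append]
  rw [hsp true, hsp false, ← Set.inter_union_distrib_left]
  apply (Set.inter_eq_left.2 _).symm
  intro ξ _
  by_cases hb : ξ w.length = true
  · exact Or.inl (mem_Cyl_singleton.2 hb)
  · exact Or.inr (mem_Cyl_singleton.2 (by simpa using hb))

def expand : ℕ → Finset (List Bool) → Finset (List Bool)
  | 0, E => E
  | (g+1), E => (expand g E).biUnion (fun w => {w ++ [true], w ++ [false]})

lemma expand_length {E : Finset (List Bool)} {m : ℕ} (hE : ∀ w ∈ E, w.length = m) :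
    ∀ g, ∀ w ∈ expand g E, w.length = m + g := by
  intro g
  induction g with
  | zero => simpa [expand] using hE
  | succ g ih =>
    intro w hw
    simp only [expand, Finset.mem_biUnion, Finset.mem_insert, Finset.mem_singleton] at hw
    obtain ⟨v, hv, hw⟩ := hw
    rcases hw with rfl | rfl <;> simp [ih v hv] <;> omega

lemma expand_union {E : Finset (List Bool)} (g : ℕ) :
    (⋃ w ∈ E, Cyl 0 w) = ⋃ w ∈ expand g E, Cyl 0 w := by
  induction g with
  | zero => rfl
  | succ g ih =>
    rw [ih]
    ext ξ
    simp only [Set.mem_iUnion, expand, Finset.mem_biUnion, Finset.mem_insert,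
      Finset.mem_singleton, exists_prop]
    constructor
    · rintro ⟨w, hw, hξ⟩
      rw [Cyl_split w] at hξ
      rcases hξ with h | h
      · exact ⟨w ++ [true], ⟨w, hw, Or.inl rfl⟩, h⟩
      · exact ⟨w ++ [false], ⟨w, hw, Or.inr rfl⟩, h⟩
    · rintro ⟨w', ⟨w, hw, hw'⟩, hξ⟩
      refine ⟨w, hw, ?_⟩
      rw [Cyl_split w]
      rcases hw' with rfl | rfl
      · exact Or.inl hξ
      · exact Or.inr hξ

lemma expand_sum {E : Finset (List Bool)} {m : ℕ} (hE : ∀ w ∈ E, w.length = m) (g : ℕ) :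
    ∑ w ∈ expand g E, strP p w = ∑ w ∈ E, strP p w := by
  induction g with
  | zero => rfl
  | succ g ih =>
    rw [← ih, expand]
    rw [Finset.sum_biUnion]
    · apply Finset.sum_congr rfl
      intro w _
      rw [Finset.sum_pair (by simp)]
      exact strP_singleton_sum w
    · intro w₁ h1 w₂ h2 hne
      simp only [Finset.disjoint_left, Finset.mem_insert, Finset.mem_singleton]
      rintro a (rfl | rfl) hmem <;> rcases hmem with h | h
      · exact hne (List.append_cancel_right h)
      · simpa using (List.append_inj_right' h rfl : [true] = [false])
      · simpa using (List.append_inj_right' h rfl : [false] = [true])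
      · exact hne (List.append_cancel_right h)

lemma mu_inter (hp0 : 0 < p) (hp1 : p < 1) (hμ : IsCoinMeasure p μ)
    (E : Finset (List Bool)) (m : ℕ) (hE : ∀ w ∈ E, w.length = m) (g : ℕ) (u : List Bool) :
    μ ((⋃ w ∈ E, Cyl 0 w) ∩ Cyl (m + g) u)
      = ENNReal.ofReal ((∑ w ∈ E, strP p w) * strP p u) := by
  rw [expand_union g, Set.iUnion₂_inter]
  have hlen := expand_length hE g
  have hset : ∀ w ∈ expand g E, Cyl 0 w ∩ Cyl (m+g) u = Cyl 0 (w ++ u) := by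
    intro w hw
    rw [← hlen w hw, Cyl_append]
  calc μ (⋃ w ∈ expand g E, Cyl 0 w ∩ Cyl (m+g) u)
      = μ (⋃ w ∈ expand g E, Cyl 0 (w ++ u)) := by
        congr 1; exact Set.iUnion₂_congr hset
    _ = ∑ w ∈ expand g E, μ (Cyl 0 (w ++ u)) := by
        refine measure_biUnion_finset ?_ (fun w _ => measurableSet_Cyl 0 _)
        intro w₁ h1 w₂ h2 hne
        refine Cyl_disjoint (by simp [hlen w₁ h1, hlen w₂ h2]) ?_
        intro h
        exact hne (List.append_cancel_right h)
    _ = ∑ w ∈ expand g E, ENNReal.ofReal (strP p w * strP p u) := by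
        refine Finset.sum_congr rfl fun w _ => ?_
        rw [mu_Cyl0 hμ, strP_append]
    _ = ENNReal.ofReal ((∑ w ∈ expand g E, strP p w) * strP p u) := by
        rw [Finset.sum_mul, ENNReal.ofReal_sum_of_nonneg]
        intro w _
        exact mul_nonneg (strP_nonneg hp0 hp1 w) (strP_nonneg hp0 hp1 u)
    _ = _ := by rw [expand_sum hE g]


instance (A : List Bool) (ξ : ℕ → Bool) : DecidablePred (occursAt A ξ) := fun n => by
  unfold occursAt; infer_instance

lemma occursAt_le {A : List Bool} {ξ : ℕ → Bool} {n : ℕ} (h : occursAt A ξ n) :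
    A.length ≤ n := h.1

lemma occursAt_congr {A : List Bool} {ξ ξ' : ℕ → Bool} {n : ℕ}
    (h : ∀ i < n, ξ i = ξ' i) : occursAt A ξ n ↔ occursAt A ξ' n := by
  unfold occursAt
  by_cases hl : A.length ≤ n
  · have : (List.ofFn fun k : Fin A.length => ξ (n - A.length + k))
        = (List.ofFn fun k : Fin A.length => ξ' (n - A.length + k)) := by
      congr 1
      funext k
      exact h _ (by omega)
    rw [this]
  · simp [hl]

lemma hitTime_eq_find {A : List Bool} {ξ : ℕ → Bool} (h : ∃ n, occursAt A ξ n) :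
    hitTime A ξ = (Nat.find h : ℕ∞) := by
  apply le_antisymm
  · exact iInf₂_le _ (Nat.find_spec h)
  · refine le_iInf₂ fun n hn => ?_
    exact_mod_cast Nat.cast_le.2 (Nat.find_min' h hn)

lemma hitTime_eq_top {A : List Bool} {ξ : ℕ → Bool} (h : ¬ ∃ n, occursAt A ξ n) :
    hitTime A ξ = ⊤ := by
  unfold hitTime
  push_neg at h
  simp [h]

lemma hitTime_eq_iff {A : List Bool} {ξ : ℕ → Bool} {m : ℕ} :
    hitTime A ξ = (m : ℕ∞) ↔ occursAt A ξ m ∧ ∀ k < m, ¬ occursAt A ξ k := by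
  constructor
  · intro h
    by_cases hex : ∃ n, occursAt A ξ n
    · rw [hitTime_eq_find hex] at h
      have hm : Nat.find hex = m := by exact_mod_cast h
      subst hm
      exact ⟨Nat.find_spec hex, fun k hk => Nat.find_min hex hk⟩
    · rw [hitTime_eq_top hex] at h
      exact absurd h.symm (by simp)
  · rintro ⟨h1, h2⟩
    have hex : ∃ n, occursAt A ξ n := ⟨m, h1⟩
    rw [hitTime_eq_find hex]
    congr 1
    have := Nat.find_min' hex h1
    have h3 := Nat.find_spec hex
    by_contra hne
    exact h2 _ (lt_of_le_of_ne this hne) h3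

lemma hitTime_congr {A : List Bool} {ξ ξ' : ℕ → Bool} {m : ℕ}
    (h : ∀ i < m, ξ i = ξ' i) : hitTime A ξ = (m:ℕ∞) ↔ hitTime A ξ' = (m:ℕ∞) := by
  rw [hitTime_eq_iff, hitTime_eq_iff]
  constructor <;> rintro ⟨h1, h2⟩
  · refine ⟨(occursAt_congr fun i hi => h i hi).1 h1, fun k hk ho => ?_⟩
    exact h2 k hk ((occursAt_congr fun i hi => h i (lt_trans hi hk)).2 ho)
  · refine ⟨(occursAt_congr fun i hi => h i hi).2 h1, fun k hk ho => ?_⟩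
    exact h2 k hk ((occursAt_congr fun i hi => h i (lt_trans hi hk)).1 ho)

open Classical in
/-- words of length `m` on which the pattern first occurs exactly at `m` -/
def hitWords (A : List Bool) (m : ℕ) : Finset (List Bool) :=
  ((Finset.univ : Finset (Fin m → Bool)).filter
    (fun a => hitTime A (fun i => if h : i < m then a ⟨i, h⟩ else false) = (m : ℕ∞))).image
    List.ofFn

lemma hitWords_length {A : List Bool} {m : ℕ} : ∀ w ∈ hitWords A m, w.length = m := by
  intro w hw
  simp only [hitWords, Finset.mem_image] at hw
  obtain ⟨a, _, rfl⟩ := hw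
  simp

lemma hitTime_setEq (A : List Bool) (m : ℕ) :
    {ξ : ℕ → Bool | hitTime A ξ = (m : ℕ∞)} = ⋃ w ∈ hitWords A m, Cyl 0 w := by
  ext ξ
  simp only [Set.mem_setOf_eq, Set.mem_iUnion, exists_prop, hitWords, Finset.mem_image,
    Finset.mem_filter, Finset.mem_univ, true_and]
  constructor
  · intro h
    refine ⟨List.ofFn (fun i : Fin m => ξ i), ⟨fun i : Fin m => ξ i, ?_, rfl⟩, ?_⟩
    · rw [← hitTime_congr (ξ := ξ)]
      · exact h
      · intro i hi
        simp [hi]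
    · intro i
      simp [Cyl]
  · rintro ⟨w, ⟨a, ha, rfl⟩, hξ⟩
    rw [hitTime_congr (ξ' := (fun i => if h : i < m then a ⟨i, h⟩ else false))]
    · exact ha
    · intro i hi
      have := hξ ⟨i, by simpa using hi⟩
      simp only [zero_add] at this
      simp [hi, this]

lemma occursAt_iff_mem_Cyl {A : List Bool} {ξ : ℕ → Bool} {n : ℕ} (hl : A.length ≤ n) :
    occursAt A ξ n ↔ ξ ∈ Cyl (n - A.length) A := by
  constructor
  · rintro ⟨-, h2⟩
    intro i
    rw [List.get_of_eq h2.symm, List.get_ofFn]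
    rfl
  · intro h
    refine ⟨hl, ?_⟩
    apply List.ext_get (by simp)
    intro i h1 h2
    rw [List.get_ofFn]
    exact h ⟨i, h2⟩

lemma hitTime_subset_Cyl {A : List Bool} {m : ℕ} {ξ : ℕ → Bool} (hm : A.length ≤ m)
    (h : hitTime A ξ = (m : ℕ∞)) : ξ ∈ Cyl (m - A.length) A :=
  (occursAt_iff_mem_Cyl hm).1 (hitTime_eq_iff.1 h).1

lemma hitTime_ge {A : List Bool} {m : ℕ} {ξ : ℕ → Bool}
    (h : hitTime A ξ = (m : ℕ∞)) : A.length ≤ m :=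
  (hitTime_eq_iff.1 h).1.1

lemma getElem_congr'' {A : List Bool} {j j' : ℕ} (hj : j < A.length) (hj' : j' < A.length)
    (h : j = j') : A[j]'hj = A[j']'hj' := by subst h; rfl

lemma drop_get {A : List Bool} {k : ℕ} (j : ℕ) (hj : j < (A.drop k).length) :
    (A.drop k).get ⟨j, hj⟩ = A.get ⟨k + j, by simp at hj; omega⟩ := by
  simp [List.getElem_drop]

lemma overlap_eq {A : List Bool} {m k : ℕ} (hm : A.length ≤ m) (hk1 : 1 ≤ k)
    (hkl : k ≤ A.length) (hcons : A.take k = A.drop (A.length - k)) :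
    {ξ : ℕ → Bool | hitTime A ξ = (m : ℕ∞)} ∩ Cyl (m - k) A
      = {ξ : ℕ → Bool | hitTime A ξ = (m : ℕ∞)} ∩ Cyl (m + 0) (A.drop k) := by
  set l := A.length with hldef
  ext ξ
  simp only [Set.mem_inter_iff, Set.mem_setOf_eq, and_congr_right_iff]
  intro hT
  have hbase : ξ ∈ Cyl (m - l) A := hitTime_subset_Cyl hm hT
  constructor
  · intro h j
    have hj : (j : ℕ) < l - k := by
      have := j.2
      simpa using this
    have e1 := h ⟨k + j, by omega⟩
    have harith : (m - k) + (k + (j:ℕ)) = m + 0 + j := by omega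
    rw [harith] at e1
    rw [e1, drop_get]
  · intro h i
    rcases Nat.lt_or_ge (i : ℕ) k with hik | hik
    · have key : A[(i:ℕ)]'(by omega) = A[l - k + (i:ℕ)]'(by omega) := by
        have hq := congrArg (fun L : List Bool => L[(i:ℕ)]?) hcons
        simp only [List.getElem?_take, List.getElem?_drop, if_pos hik] at hq
        rw [List.getElem?_eq_getElem (by omega : (i:ℕ) < A.length),
          List.getElem?_eq_getElem (by omega : l - k + (i:ℕ) < A.length)] at hq
        exact Option.some.inj hq
      have e1 := hbase ⟨l - k + i, by omega⟩
      have harith : (m - l) + (l - k + (i:ℕ)) = (m - k) + i := by omega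
      rw [harith] at e1
      rw [e1]
      simp only [List.get_eq_getElem]
      exact key.symm
    · have hi2 : (i:ℕ) - k < (A.drop k).length := by simp; omega
      have e1 := h ⟨(i:ℕ) - k, hi2⟩
      have harith : (m + 0) + ((i:ℕ) - k) = (m - k) + i := by omega
      rw [harith] at e1
      rw [e1, drop_get]
      simp only [List.get_eq_getElem]
      exact getElem_congr'' _ _ (by omega)

lemma overlap_empty {A : List Bool} {m k : ℕ} (hm : A.length ≤ m) (hk1 : 1 ≤ k)
    (hkl : k ≤ A.length) (hcons : ¬ (A.take k = A.drop (A.length - k))) :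
    {ξ : ℕ → Bool | hitTime A ξ = (m : ℕ∞)} ∩ Cyl (m - k) A = ∅ := by
  set l := A.length with hldef
  by_contra hne
  obtain ⟨ξ, hT, hC⟩ := Set.nonempty_iff_ne_empty.2 hne
  have hbase : ξ ∈ Cyl (m - l) A := hitTime_subset_Cyl hm hT
  apply hcons
  apply List.ext_get (by simp; omega)
  intro i h1 h2
  have hik : i < k := by
    have h1' := h1
    simp only [List.length_take] at h1'
    omega
  have e1 := hbase ⟨l - k + i, by omega⟩
  have e2 := hC ⟨i, by omega⟩
  have harith : (m - l) + (l - k + i) = (m - k) + i := by omega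
  rw [harith] at e1
  have := e2.symm.trans e1
  simp only [List.get_eq_getElem] at this ⊢
  rw [List.getElem_take, List.getElem_drop]
  exact this

lemma cylA_decomp {A : List Bool} {n : ℕ} (hn : A.length ≤ n) :
    Cyl (n - A.length) A
      = ⋃ m ∈ Finset.range (n+1), ({ξ : ℕ → Bool | hitTime A ξ = (m:ℕ∞)} ∩ Cyl (n - A.length) A) := by
  ext ξ
  simp only [Set.mem_iUnion, Finset.mem_range, exists_prop, Set.mem_inter_iff, Set.mem_setOf_eq]
  constructor
  · intro h
    have hex : ∃ j, occursAt A ξ j := ⟨n, (occursAt_iff_mem_Cyl hn).2 h⟩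
    refine ⟨Nat.find hex, ?_, hitTime_eq_find hex, h⟩
    have := Nat.find_min' hex ((occursAt_iff_mem_Cyl hn).2 h)
    omega
  · rintro ⟨m, -, -, h⟩
    exact h


section Measures

variable (p) (A : List Bool)

/-- real probability that the pattern first occurs at time `m` -/
def fR (m : ℕ) : ℝ := ∑ w ∈ hitWords A m, strP p w

/-- coefficients of the renewal equation -/
def cR (j : ℕ) : ℝ :=
  if A.length ≤ j then strP p A
  else (if A.take (A.length - j) = A.drop j then (1:ℝ) else 0) * strP p (A.drop (A.length - j))

variable {p A}

lemma fR_nonneg (hp0 : 0 < p) (hp1 : p < 1) (m : ℕ) : 0 ≤ fR p A m :=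
  Finset.sum_nonneg fun w _ => strP_nonneg hp0 hp1 w

lemma cR_nonneg (hp0 : 0 < p) (hp1 : p < 1) (j : ℕ) : 0 ≤ cR p A j := by
  unfold cR
  split
  · exact strP_nonneg hp0 hp1 A
  · apply mul_nonneg
    · split <;> norm_num
    · exact strP_nonneg hp0 hp1 _

lemma cR_le_one (hp0 : 0 < p) (hp1 : p < 1) (j : ℕ) : cR p A j ≤ 1 := by
  unfold cR
  split
  · exact strP_le_one hp0 hp1 A
  · calc (if A.take (A.length - j) = A.drop j then (1:ℝ) else 0) * strP p (A.drop (A.length - j))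
        ≤ 1 * 1 := by
          apply mul_le_mul
          · split <;> norm_num
          · exact strP_le_one hp0 hp1 _
          · exact strP_nonneg hp0 hp1 _
          · norm_num
      _ = 1 := one_mul 1

lemma mu_hitTime (hp0 : 0 < p) (hp1 : p < 1) (hμ : IsCoinMeasure p μ) (m : ℕ) :
    μ {ξ : ℕ → Bool | hitTime A ξ = (m:ℕ∞)} = ENNReal.ofReal (fR p A m) := by
  rw [hitTime_setEq]
  exact mu_biUnion hp0 hp1 hμ _ m hitWords_length

lemma fR_eq_toReal (hp0 : 0 < p) (hp1 : p < 1) (hμ : IsCoinMeasure p μ) (m : ℕ) :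
    (μ {ξ : ℕ → Bool | hitTime A ξ = (m:ℕ∞)}).toReal = fR p A m := by
  rw [mu_hitTime hp0 hp1 hμ, ENNReal.toReal_ofReal (fR_nonneg hp0 hp1 m)]

lemma measurableSet_hitTime (m : ℕ) :
    MeasurableSet {ξ : ℕ → Bool | hitTime A ξ = (m:ℕ∞)} := by
  rw [hitTime_setEq]
  exact (hitWords A m).measurableSet_biUnion fun w _ => measurableSet_Cyl 0 w

lemma mu_hitTime_inter (hp0 : 0 < p) (hp1 : p < 1) (hμ : IsCoinMeasure p μ) (m g : ℕ) (u : List Bool) :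
    μ ({ξ : ℕ → Bool | hitTime A ξ = (m:ℕ∞)} ∩ Cyl (m + g) u)
      = ENNReal.ofReal (fR p A m * strP p u) := by
  rw [hitTime_setEq]
  exact mu_inter hp0 hp1 hμ _ m hitWords_length g u

lemma hitTime_empty_of_lt {m : ℕ} (hm : m < A.length) :
    {ξ : ℕ → Bool | hitTime A ξ = (m:ℕ∞)} = ∅ := by
  ext ξ
  simp only [Set.mem_setOf_eq, Set.mem_empty_iff_false, iff_false]
  intro h
  exact absurd (hitTime_ge h) (by omega)

lemma fR_eq_zero_of_lt (hp0 : 0 < p) (hp1 : p < 1) (hμ : IsCoinMeasure p μ) {m : ℕ} (hm : m < A.length) : fR p A m = 0 := by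
  have h := mu_hitTime hp0 hp1 hμ (A := A) m
  rw [hitTime_empty_of_lt hm, measure_empty] at h
  have := fR_nonneg (A := A) hp0 hp1 m
  have h2 : ENNReal.ofReal (fR p A m) = 0 := h.symm
  rw [ENNReal.ofReal_eq_zero] at h2
  linarith

/-- the key per-term computation -/
lemma mu_term (hp0 : 0 < p) (hp1 : p < 1) (hμ : IsCoinMeasure p μ) (n m : ℕ) (hmn : m ≤ n) (hn : A.length ≤ n) :
    μ ({ξ : ℕ → Bool | hitTime A ξ = (m:ℕ∞)} ∩ Cyl (n - A.length) A)
      = ENNReal.ofReal (fR p A m * cR p A (n - m)) := by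
  set l := A.length with hldef
  rcases Nat.lt_or_ge m l with hml | hml
  · rw [hitTime_empty_of_lt hml, Set.empty_inter, measure_empty,
      fR_eq_zero_of_lt hp0 hp1 hμ hml, zero_mul, ENNReal.ofReal_zero]
  rcases le_or_gt l (n - m) with hc | hc
  · -- no overlap
    have hg : n - l = m + (n - l - m) := by omega
    rw [hg, mu_hitTime_inter hp0 hp1 hμ]
    have : cR p A (n - m) = strP p A := by unfold cR; rw [if_pos hc]
    rw [this]
  · -- overlap, k = l - (n - m)
    set k := l - (n - m) with hkdef
    have hk1 : 1 ≤ k := by omega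
    have hkl : k ≤ l := by omega
    have hnl : n - l = m - k := by omega
    have hlk : l - k = n - m := by omega
    have hcR : cR p A (n - m)
        = (if A.take k = A.drop (l - k) then (1:ℝ) else 0) * strP p (A.drop k) := by
      unfold cR
      rw [if_neg (by omega)]
      rw [hlk]
    by_cases hcons : A.take k = A.drop (l - k)
    · rw [hnl, overlap_eq hml hk1 hkl hcons, mu_hitTime_inter hp0 hp1 hμ, hcR,
        if_pos hcons, one_mul]
    · rw [hnl, overlap_empty hml hk1 hkl hcons, measure_empty, hcR, if_neg hcons,
        zero_mul, mul_zero, ENNReal.ofReal_zero]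

lemma mu_CylA (hp0 : 0 < p) (hp1 : p < 1) (hμ : IsCoinMeasure p μ) {n : ℕ} (hn : A.length ≤ n) :
    μ (Cyl (n - A.length) A) = ENNReal.ofReal (strP p A) := by
  have h := mu_inter hp0 hp1 hμ {([] : List Bool)} 0 (by simp) (n - A.length) A
  have he : (⋃ w ∈ ({([] : List Bool)} : Finset (List Bool)), Cyl 0 w) = Set.univ := by
    ext ξ
    simp [Cyl]
  rw [he, Set.univ_inter, zero_add] at h
  rw [h]
  simp [strP]

/-- the renewal equation -/
lemma renewal (hp0 : 0 < p) (hp1 : p < 1) (hμ : IsCoinMeasure p μ) {n : ℕ} (hn : A.length ≤ n) :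
    ∑ m ∈ Finset.range (n+1), fR p A m * cR p A (n - m) = strP p A := by
  have h1 := mu_CylA hp0 hp1 hμ hn
  rw [cylA_decomp hn] at h1
  rw [measure_biUnion_finset ?hd
      (fun m _ => (measurableSet_hitTime m).inter (measurableSet_Cyl _ _))] at h1
  case hd =>
    intro m₁ h1' m₂ h2' hne
    refine Set.disjoint_left.2 fun ξ hξ1 hξ2 => hne ?_
    have e1 : ((m₁:ℕ∞)) = hitTime A ξ := hξ1.1.symm
    have e2 : ((m₂:ℕ∞)) = hitTime A ξ := hξ2.1.symm
    exact_mod_cast e1.trans e2.symm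
  have h2 : ∀ m ∈ Finset.range (n+1),
      μ ({ξ : ℕ → Bool | hitTime A ξ = (m:ℕ∞)} ∩ Cyl (n - A.length) A)
        = ENNReal.ofReal (fR p A m * cR p A (n - m)) := by
    intro m hm
    exact mu_term hp0 hp1 hμ n m (by simpa [Nat.lt_succ_iff] using hm) hn
  rw [Finset.sum_congr rfl h2] at h1
  rw [← ENNReal.ofReal_sum_of_nonneg
      (fun m _ => mul_nonneg (fR_nonneg hp0 hp1 m) (cR_nonneg hp0 hp1 _))] at h1
  have hnn1 : 0 ≤ ∑ m ∈ Finset.range (n+1), fR p A m * cR p A (n - m) :=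
    Finset.sum_nonneg fun m _ => mul_nonneg (fR_nonneg hp0 hp1 m) (cR_nonneg hp0 hp1 _)
  have := ENNReal.ofReal_eq_ofReal_iff hnn1 (strP_nonneg hp0 hp1 A)
  exact this.1 h1

lemma sum_fR_le_one (hp0 : 0 < p) (hp1 : p < 1) (hμ : IsCoinMeasure p μ) (N : ℕ) : ∑ m ∈ Finset.range N, fR p A m ≤ 1 := by
  rw [← ENNReal.ofReal_le_one, ENNReal.ofReal_sum_of_nonneg (fun m _ => fR_nonneg hp0 hp1 m)]
  have : ∀ m ∈ Finset.range N, ENNReal.ofReal (fR p A m)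
      = μ {ξ : ℕ → Bool | hitTime A ξ = (m:ℕ∞)} := fun m _ => (mu_hitTime hp0 hp1 hμ m).symm
  rw [Finset.sum_congr rfl this]
  rw [← measure_biUnion_finset ?hd (fun m _ => measurableSet_hitTime m)]
  · exact prob_le_one
  case hd =>
    intro m₁ h1' m₂ h2' hne
    refine Set.disjoint_left.2 fun ξ hξ1 hξ2 => hne ?_
    have e1 : ((m₁:ℕ∞)) = hitTime A ξ := hξ1.symm
    have e2 : ((m₂:ℕ∞)) = hitTime A ξ := hξ2.symm
    exact_mod_cast e1.trans e2.symm

lemma fR_le_one (hp0 : 0 < p) (hp1 : p < 1) (hμ : IsCoinMeasure p μ) (m : ℕ) : fR p A m ≤ 1 := by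
  have h := sum_fR_le_one hp0 hp1 hμ (A := A) (m+1)
  have h2 : ∑ j ∈ Finset.range (m+1), fR p A j ≥ fR p A m :=
    Finset.single_le_sum (fun j _ => fR_nonneg hp0 hp1 j) (by simp)
  linarith

lemma summable_fR (hp0 : 0 < p) (hp1 : p < 1) (hμ : IsCoinMeasure p μ) : Summable (fR p A) :=
  summable_of_sum_range_le (fR_nonneg hp0 hp1) (sum_fR_le_one hp0 hp1 hμ)

end Measures


section Analytic

variable {p : ℝ} {A : List Bool} {μ : Measure (ℕ → Bool)} [IsProbabilityMeasure μ]

lemma summable_norm_f (hp0 : 0 < p) (hp1 : p < 1) (hμ : IsCoinMeasure p μ) {s : ℝ}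
    (hs : |s| < 1) : Summable (fun n => ‖fR p A n * s ^ n‖) := by
  apply Summable.of_nonneg_of_le (fun n => norm_nonneg _) (fun n => ?_)
    (summable_geometric_of_lt_one (abs_nonneg s) hs)
  rw [norm_mul, norm_pow, Real.norm_eq_abs, Real.norm_eq_abs,
    abs_of_nonneg (fR_nonneg hp0 hp1 n)]
  calc fR p A n * |s| ^ n ≤ 1 * |s| ^ n := by
        apply mul_le_mul_of_nonneg_right (fR_le_one hp0 hp1 hμ n) (by positivity)
    _ = |s| ^ n := one_mul _

lemma summable_norm_c (hp0 : 0 < p) (hp1 : p < 1) {s : ℝ}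
    (hs : |s| < 1) : Summable (fun n => ‖cR p A n * s ^ n‖) := by
  apply Summable.of_nonneg_of_le (fun n => norm_nonneg _) (fun n => ?_)
    (summable_geometric_of_lt_one (abs_nonneg s) hs)
  rw [norm_mul, norm_pow, Real.norm_eq_abs, Real.norm_eq_abs,
    abs_of_nonneg (cR_nonneg hp0 hp1 n)]
  calc cR p A n * |s| ^ n ≤ 1 * |s| ^ n := by
        apply mul_le_mul_of_nonneg_right (cR_le_one hp0 hp1 n) (by positivity)
    _ = |s| ^ n := one_mul _

lemma tail_geom (hP : 0 ≤ strP p A) {s : ℝ} (hs : |s| < 1) :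
    ∑' j : ℕ, strP p A * s ^ (j + A.length)
      = strP p A * s ^ A.length * (1 - s)⁻¹ := by
  have : ∀ j : ℕ, strP p A * s ^ (j + A.length) = (strP p A * s ^ A.length) * s ^ j := by
    intro j; rw [pow_add]; ring
  rw [tsum_congr this, tsum_mul_left, tsum_geometric_of_abs_lt_one hs]

lemma sum_cR_head : ∑ j ∈ Finset.range A.length, cR p A j * s₀ ^ j = corrW p A A s₀ := by
  unfold corrW
  rw [min_self]
  refine Finset.sum_nbij' (fun j => A.length - j) (fun k => A.length - k) ?_ ?_ ?_ ?_ ?_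
  · intro j hj
    simp only [Finset.mem_range] at hj
    simp only [Finset.mem_Icc]
    omega
  · intro k hk
    simp only [Finset.mem_Icc] at hk
    simp only [Finset.mem_range]
    omega
  · intro j hj
    simp only [Finset.mem_range] at hj
    omega
  · intro k hk
    simp only [Finset.mem_Icc] at hk
    omega
  · intro j hj
    simp only [Finset.mem_range] at hj
    unfold cR
    rw [if_neg (by omega)]
    have h1 : A.length - (A.length - j) = j := by omega
    rw [h1, mul_assoc]

/-- the generating function identity for `|s| < 1` -/
lemma gen_eq_open (hp0 : 0 < p) (hp1 : p < 1) (hμ : IsCoinMeasure p μ)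
    (hA : 1 ≤ A.length) {s : ℝ} (hs : |s| < 1) :
    (∑' n : ℕ, fR p A n * s ^ n) *
        (strP p A * s ^ A.length + (1 - s) * corrW p A A s) =
      strP p A * s ^ A.length := by
  set l := A.length with hl
  set P := strP p A with hP
  have hPnn : 0 ≤ P := strP_nonneg hp0 hp1 A
  have hf := summable_norm_f hp0 hp1 hμ (A := A) hs
  have hc := summable_norm_c hp0 hp1 (A := A) hs
  have key := tsum_mul_tsum_eq_tsum_sum_range_of_summable_norm hf hc
  -- identify the Cauchy product with the geometric tail
  have hconv : ∀ n : ℕ, (∑ k ∈ Finset.range (n+1), (fR p A k * s ^ k) * (cR p A (n - k) * s ^ (n - k)))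
      = (if l ≤ n then P * s ^ n else 0) := by
    intro n
    have e1 : ∀ k ∈ Finset.range (n+1),
        (fR p A k * s ^ k) * (cR p A (n - k) * s ^ (n - k))
          = (fR p A k * cR p A (n - k)) * s ^ n := by
      intro k hk
      simp only [Finset.mem_range, Nat.lt_succ_iff] at hk
      have : s ^ k * s ^ (n - k) = s ^ n := by
        rw [← pow_add]
        congr 1
        omega
      calc (fR p A k * s ^ k) * (cR p A (n - k) * s ^ (n - k))
          = (fR p A k * cR p A (n - k)) * (s ^ k * s ^ (n - k)) := by ring
        _ = _ := by rw [this]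
    rw [Finset.sum_congr rfl e1, ← Finset.sum_mul]
    rcases le_or_gt l n with hn | hn
    · rw [renewal hp0 hp1 hμ hn, if_pos hn]
    · rw [if_neg (by omega)]
      have : ∀ k ∈ Finset.range (n+1), fR p A k * cR p A (n - k) = 0 := by
        intro k hk
        simp only [Finset.mem_range, Nat.lt_succ_iff] at hk
        rw [fR_eq_zero_of_lt hp0 hp1 hμ (by omega), zero_mul]
      rw [Finset.sum_congr rfl this, Finset.sum_const_zero, zero_mul]
  rw [tsum_congr hconv] at key
  -- compute RHS of key
  have hgs : Summable (fun n : ℕ => if l ≤ n then P * s ^ n else 0) := by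
    apply Summable.of_norm_bounded (g := fun n => P * |s| ^ n)
      (((summable_geometric_of_lt_one (abs_nonneg s) hs)).mul_left P)
    intro n
    rw [Real.norm_eq_abs]
    split
    · rw [abs_mul, abs_of_nonneg hPnn, abs_pow]
    · simp [mul_nonneg hPnn (by positivity : (0:ℝ) ≤ |s| ^ n)]
  have hgeo : (∑' n : ℕ, if l ≤ n then P * s ^ n else 0) = P * s ^ l * (1 - s)⁻¹ := by
    rw [← Summable.sum_add_tsum_nat_add l hgs]
    have h0 : ∑ i ∈ Finset.range l, (if l ≤ i then P * s ^ i else 0) = 0 := by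
      apply Finset.sum_eq_zero
      intro i hi
      simp only [Finset.mem_range] at hi
      rw [if_neg (by omega)]
    have h1 : ∀ j : ℕ, (if l ≤ j + l then P * s ^ (j + l) else 0) = P * s ^ (j + l) := by
      intro j; rw [if_pos (by omega)]
    rw [h0, zero_add, tsum_congr h1, tail_geom hPnn hs]
  rw [hgeo] at key
  -- compute the c-series
  have hcsum : (∑' n : ℕ, cR p A n * s ^ n) = corrW p A A s + P * s ^ l * (1 - s)⁻¹ := by
    rw [← Summable.sum_add_tsum_nat_add l hc.of_norm]
    have h1 : ∀ j : ℕ, cR p A (j + l) * s ^ (j + l) = P * s ^ (j + l) := by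
      intro j
      unfold cR
      rw [if_pos (by omega)]
    rw [sum_cR_head, tsum_congr h1, tail_geom hPnn hs]
  rw [hcsum] at key
  -- conclude by algebra
  set F := ∑' n : ℕ, fR p A n * s ^ n
  set W := corrW p A A s
  have h1s : (1:ℝ) - s ≠ 0 := by
    intro h
    rw [sub_eq_zero] at h
    rw [← h] at hs
    simp at hs
  have e : P * s ^ l * (1 - s)⁻¹ * (1 - s) = P * s ^ l := by
    rw [mul_assoc, inv_mul_cancel₀ h1s, mul_one]
  calc F * (P * s ^ l + (1 - s) * W)
      = F * ((P * s ^ l * (1 - s)⁻¹ * (1 - s)) + (1 - s) * W) := by rw [e]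
    _ = (F * (W + P * s ^ l * (1 - s)⁻¹)) * (1 - s) := by ring
    _ = (P * s ^ l * (1 - s)⁻¹) * (1 - s) := by rw [key]
    _ = P * s ^ l := e

end Analytic


section Continuity

variable {p : ℝ} {A : List Bool} {μ : Measure (ℕ → Bool)} [IsProbabilityMeasure μ]

lemma continuousOn_G (hp0 : 0 < p) (hp1 : p < 1) (hμ : IsCoinMeasure p μ) :
    ContinuousOn (fun x : ℝ => ∑' n : ℕ, fR p A n * x ^ n) (Set.Icc (-1 : ℝ) 1) := by
  rw [continuousOn_iff_continuous_restrict]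
  apply continuous_tsum (u := fR p A)
    (f := fun (n : ℕ) (x : Set.Icc (-1:ℝ) 1) => fR p A n * (x : ℝ) ^ n)
  · intro n
    exact continuous_const.mul (continuous_subtype_val.pow n)
  · exact summable_fR hp0 hp1 hμ
  · intro n x
    rw [Real.norm_eq_abs, abs_mul, abs_pow, abs_of_nonneg (fR_nonneg hp0 hp1 n)]
    have hx : |(x : ℝ)| ≤ 1 := abs_le.2 ⟨x.2.1, x.2.2⟩
    calc fR p A n * |(x:ℝ)| ^ n ≤ fR p A n * 1 := by
          apply mul_le_mul_of_nonneg_left _ (fR_nonneg hp0 hp1 n)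
          exact pow_le_one₀ (abs_nonneg _) hx
      _ = fR p A n := mul_one _

lemma continuous_D : Continuous (fun x : ℝ =>
    strP p A * x ^ A.length + (1 - x) * corrW p A A x) := by
  apply Continuous.add
  · exact continuous_const.mul (continuous_pow _)
  · apply Continuous.mul
    · exact continuous_const.sub continuous_id
    · unfold corrW
      apply continuous_finset_sum
      intro k _
      exact continuous_const.mul (continuous_pow _)

/-- the generating function identity on all of `[-1,1]` by continuity -/
lemma gen_eq (hp0 : 0 < p) (hp1 : p < 1) (hμ : IsCoinMeasure p μ)
    (hA : 1 ≤ A.length) {s : ℝ} (hs : s ∈ Set.Icc (-1:ℝ) 1) :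
    (∑' n : ℕ, fR p A n * s ^ n) *
        (strP p A * s ^ A.length + (1 - s) * corrW p A A s) =
      strP p A * s ^ A.length := by
  set Φ : ℝ → ℝ := fun x => (∑' n : ℕ, fR p A n * x ^ n) *
      (strP p A * x ^ A.length + (1 - x) * corrW p A A x) -
      strP p A * x ^ A.length with hΦ
  have hcont : ContinuousOn Φ (Set.Icc (-1:ℝ) 1) := by
    apply ContinuousOn.sub
    · exact (continuousOn_G hp0 hp1 hμ).mul continuous_D.continuousOn
    · exact (continuous_const.mul (continuous_pow _)).continuousOn
  have hzero : ∀ x ∈ Set.Ioo (-1:ℝ) 1, Φ x = 0 := by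
    intro x hx
    have := gen_eq_open hp0 hp1 hμ hA (abs_lt.2 ⟨hx.1, hx.2⟩)
    rw [hΦ]
    dsimp only
    linarith
  have hclo : s ∈ closure (Set.Ioo (-1:ℝ) 1) := by
    rw [closure_Ioo (by norm_num : (-1:ℝ) ≠ 1)]
    exact hs
  haveI hnb : (nhdsWithin s (Set.Ioo (-1:ℝ) 1)).NeBot :=
    mem_closure_iff_nhdsWithin_neBot.1 hclo
  have h1 : Filter.Tendsto Φ (nhdsWithin s (Set.Ioo (-1:ℝ) 1)) (nhds (Φ s)) :=
    ((hcont s hs).mono Set.Ioo_subset_Icc_self).tendsto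
  have h2 : Filter.Tendsto Φ (nhdsWithin s (Set.Ioo (-1:ℝ) 1)) (nhds 0) := by
    refine Filter.Tendsto.congr' ?_ tendsto_const_nhds
    filter_upwards [self_mem_nhdsWithin] with x hx
    exact (hzero x hx).symm
  have hfin : Φ s = 0 := tendsto_nhds_unique h1 h2
  rw [hΦ] at hfin
  dsimp only at hfin
  linarith

end Continuity

end CoinPf

/-- For every `s ∈ [−1,1]`, the probability generating function
`g_{τ_A}(s) = Σ_{n≥0} p_n s^n` satisfies
`g_{τ_A}(s) ⬝ (P(A) s^l + (1−s) Σ_{k=1}^{l} [A_(k)=A^(k)] P(A^(l−k)) s^{l−k}) = P(A) s^l`,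
and wherever the second factor is nonzero, `g_{τ_A}(s)` equals the corresponding quotient.
(Here `Σ_{k=1}^{l} [A_(k)=A^(k)] P(A^(l−k)) s^{l−k} = w_A^A(s) = corrW p A A s`.) -/
theorem pgf_identity (p : ℝ) (hp0 : 0 < p) (hp1 : p < 1)
    (μ : Measure (ℕ → Bool)) [IsProbabilityMeasure μ] (hμ : IsCoinMeasure p μ)
    (A : List Bool) (hA : 1 ≤ A.length) (s : ℝ) (hs : s ∈ Set.Icc (-1 : ℝ) 1) :
    (∑' n : ℕ, (μ {ξ | hitTime A ξ = (n : ℕ∞)}).toReal * s ^ n) *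
        (strP p A * s ^ A.length + (1 - s) * corrW p A A s) =
      strP p A * s ^ A.length ∧
    (strP p A * s ^ A.length + (1 - s) * corrW p A A s ≠ 0 →
      (∑' n : ℕ, (μ {ξ | hitTime A ξ = (n : ℕ∞)}).toReal * s ^ n) =
        strP p A * s ^ A.length /
          (strP p A * s ^ A.length + (1 - s) * corrW p A A s)) := by
  have hrw : (∑' n : ℕ, (μ {ξ | hitTime A ξ = (n : ℕ∞)}).toReal * s ^ n)
      = ∑' n : ℕ, CoinPf.fR p A n * s ^ n := by
    apply tsum_congr
    intro n
    rw [CoinPf.fR_eq_toReal hp0 hp1 hμ]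
  rw [hrw]
  have hmain := CoinPf.gen_eq hp0 hp1 hμ hA hs
  exact ⟨hmain, fun hne => (eq_div_iff hne).2 hmain⟩
end
end

section
/- For every s ∈ [−1,1], the tail generating function Q_{τ_A}(s) = Σ_{n≥0} q_n s^n satisfies the identity Q_{τ_A}(s) · ( P(A) s^l + (1 − s) Σ_{k=1}^{l} [A_(k) = A^(k)] P(A^(l−k)) s^{l−k} ) = Σ_{k=1}^{l} [A_(k) = A^(k)] P(A^(l−k)) s^{l−k}. -/
open MeasureTheory ENNReal

noncomputable section

namespace TailAux

variable {p : ℝ}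

lemma letterP_pos (hp0 : 0 < p) (hp1 : p < 1) (b : Bool) : 0 < letterP p b := by
  cases b <;> simp [letterP] <;> linarith

lemma letterP_lt_one (hp0 : 0 < p) (hp1 : p < 1) (b : Bool) : letterP p b < 1 := by
  cases b <;> simp [letterP] <;> linarith

lemma strP_pos (hp0 : 0 < p) (hp1 : p < 1) (A : List Bool) : 0 < strP p A := by
  induction A with
  | nil => simp [strP]
  | cons a t ih =>
    simp only [strP, List.map_cons, List.prod_cons] at *
    exact mul_pos (letterP_pos hp0 hp1 a) ih

lemma strP_le_one (hp0 : 0 < p) (hp1 : p < 1) (A : List Bool) : strP p A ≤ 1 := by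
  induction A with
  | nil => simp [strP]
  | cons a t ih =>
    simp only [strP, List.map_cons, List.prod_cons] at *
    nlinarith [letterP_pos hp0 hp1 a, letterP_lt_one hp0 hp1 a, strP_pos hp0 hp1 t]

lemma strP_lt_one (hp0 : 0 < p) (hp1 : p < 1) (A : List Bool) (hA : 1 ≤ A.length) :
    strP p A < 1 := by
  cases A with
  | nil => simp at hA
  | cons a t =>
    simp only [strP, List.map_cons, List.prod_cons]
    have h1 := letterP_pos hp0 hp1 a
    have h2 := letterP_lt_one hp0 hp1 a
    have h3 := strP_pos hp0 hp1 t
    have h4 := strP_le_one hp0 hp1 t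
    simp only [strP] at h3 h4
    nlinarith

lemma strP_eq_prod (A : List Bool) : strP p A = ∏ i, letterP p (A.get i) := by
  conv_lhs => rw [strP, ← List.ofFn_get A, List.map_ofFn, List.prod_ofFn]
  simp [Function.comp]

/-- Measure of a finite union of cylinders. -/
lemma meas_cyl {μ : Measure (ℕ → Bool)} (hμ : IsCoinMeasure p μ)
    (hp0 : 0 < p) (hp1 : p < 1) (N : ℕ) (S : Finset (Fin N → Bool)) :
    μ {ξ | (fun i : Fin N => ξ i) ∈ S} =
      ENNReal.ofReal (∑ a ∈ S, ∏ i, letterP p (a i)) := by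
  have hset : {ξ : ℕ → Bool | (fun i : Fin N => ξ i) ∈ S}
      = ⋃ a ∈ S, {ξ : ℕ → Bool | ∀ i : Fin N, ξ i = a i} := by
    ext ξ
    simp only [Set.mem_setOf_eq, Set.mem_iUnion, exists_prop]
    constructor
    · intro h; exact ⟨_, h, fun i => rfl⟩
    · rintro ⟨a, ha, h⟩
      have : (fun i : Fin N => ξ i) = a := funext h
      rwa [this]
  rw [hset, measure_biUnion_finset]
  · rw [ENNReal.ofReal_sum_of_nonneg]
    · exact Finset.sum_congr rfl fun a _ => hμ N a
    · intro a _
      exact Finset.prod_nonneg fun i _ => (letterP_pos hp0 hp1 _).le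
  · intro a _ b _ hab
    simp only [Function.onFun, Set.disjoint_left]
    intro ξ h1 h2
    exact hab (funext fun i => (h1 i).symm.trans (h2 i))
  · intro a _
    have : {ξ : ℕ → Bool | ∀ i : Fin N, ξ i = a i}
        = ⋂ i : Fin N, (fun ξ : ℕ → Bool => ξ (i : ℕ)) ⁻¹' {a i} := by
      ext ξ; simp
    rw [this]
    exact MeasurableSet.iInter fun i =>
      (measurable_pi_apply (i : ℕ)) (measurableSet_singleton _)

/-- An event determined by the first `m` coordinates. -/
def Det (m : ℕ) (E : Set (ℕ → Bool)) : Prop :=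
  ∀ ξ η : ℕ → Bool, (∀ i < m, ξ i = η i) → (ξ ∈ E ↔ η ∈ E)

open Classical in
/-- The finite model of a determined event. -/
def detSet (m : ℕ) (E : Set (ℕ → Bool)) : Finset (Fin m → Bool) :=
  Finset.univ.filter (fun a => (fun i : ℕ => if h : i < m then a ⟨i, h⟩ else false) ∈ E)

lemma mem_detSet_iff {m : ℕ} {E : Set (ℕ → Bool)} (hE : Det m E) (ξ : ℕ → Bool) :
    (fun i : Fin m => ξ i) ∈ detSet m E ↔ ξ ∈ E := by
  classical
  simp only [detSet, Finset.mem_filter, Finset.mem_univ, true_and]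
  exact hE _ ξ (fun i hi => by simp [hi])

lemma det_repr {m : ℕ} {E : Set (ℕ → Bool)} (hE : Det m E) :
    E = {ξ | (fun i : Fin m => ξ i) ∈ detSet m E} := by
  ext ξ; exact (mem_detSet_iff hE ξ).symm

lemma meas_det {μ : Measure (ℕ → Bool)} (hμ : IsCoinMeasure p μ)
    (hp0 : 0 < p) (hp1 : p < 1) {m : ℕ} {E : Set (ℕ → Bool)} (hE : Det m E) :
    μ E = ENNReal.ofReal (∑ a ∈ detSet m E, ∏ i, letterP p (a i)) := by
  conv_lhs => rw [det_repr hE]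
  exact meas_cyl hμ hp0 hp1 m _

lemma det_measurable {m : ℕ} {E : Set (ℕ → Bool)} (hE : Det m E) : MeasurableSet E := by
  rw [det_repr hE]
  have hf : Measurable (fun ξ : ℕ → Bool => fun i : Fin m => ξ (i : ℕ)) :=
    measurable_pi_lambda _ (fun i => measurable_pi_apply (i : ℕ))
  have hs : MeasurableSet (detSet m E : Set (Fin m → Bool)) :=
    (detSet m E : Set (Fin m → Bool)).toFinite.measurableSet
  exact hf hs

/-- Independence: a first-`m`-coordinates event and a cylinder condition on
coordinates `m, …, m+j-1`. -/
lemma meas_inter_cyl {μ : Measure (ℕ → Bool)} (hμ : IsCoinMeasure p μ)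
    (hp0 : 0 < p) (hp1 : p < 1) {m : ℕ} {E : Set (ℕ → Bool)} (hE : Det m E)
    (j : ℕ) (b : Fin j → Bool) :
    μ (E ∩ {ξ | ∀ i : Fin j, ξ (m + i) = b i}) =
      μ E * ENNReal.ofReal (∏ i, letterP p (b i)) := by
  classical
  set T := detSet m E with hT
  have happ : ∀ a : Fin m → Bool, ∀ ξ : ℕ → Bool,
      ((fun i : Fin (m + j) => ξ i) = Fin.append a b ↔
        ((fun i : Fin m => ξ i) = a ∧ ∀ i : Fin j, ξ (m + i) = b i)) := by
    intro a ξ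
    constructor
    · intro h
      constructor
      · funext i
        have := congrFun h (Fin.castAdd j i)
        rwa [Fin.append_left, Fin.coe_castAdd] at this
      · intro i
        have := congrFun h (Fin.natAdd m i)
        rwa [Fin.append_right, Fin.coe_natAdd] at this
    · rintro ⟨h1, h2⟩
      funext i
      refine Fin.addCases (fun i₀ => ?_) (fun i₀ => ?_) i
      · rw [Fin.append_left, Fin.coe_castAdd, ← congrFun h1 i₀]
      · rw [Fin.append_right, Fin.coe_natAdd]; exact h2 i₀
  have hset : E ∩ {ξ : ℕ → Bool | ∀ i : Fin j, ξ (m + i) = b i}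
      = {ξ : ℕ → Bool | (fun i : Fin (m + j) => ξ i) ∈ T.image (fun a => Fin.append a b)} := by
    ext ξ
    simp only [Set.mem_inter_iff, Set.mem_setOf_eq, Finset.mem_image]
    constructor
    · rintro ⟨h1, h2⟩
      exact ⟨fun i : Fin m => ξ i, (mem_detSet_iff hE ξ).2 h1,
        ((happ _ ξ).2 ⟨rfl, h2⟩).symm⟩
    · rintro ⟨a, ha, h⟩
      obtain ⟨h1, h2⟩ := (happ a ξ).1 h.symm
      refine ⟨?_, h2⟩
      rw [← mem_detSet_iff hE ξ, h1]; exact ha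
  rw [hset, meas_cyl hμ hp0 hp1 (m + j), meas_det hμ hp0 hp1 hE]
  have hinj : Set.InjOn (fun a : Fin m → Bool => Fin.append a b) T := by
    intro a _ a' _ h
    funext i
    have := congrFun h (Fin.castAdd j i)
    simpa [Fin.append_left] using this
  rw [Finset.sum_image hinj]
  rw [← ENNReal.ofReal_mul (Finset.sum_nonneg fun a _ =>
    Finset.prod_nonneg fun i _ => (letterP_pos hp0 hp1 _).le)]
  congr 1
  rw [Finset.sum_mul]
  refine Finset.sum_congr rfl fun a _ => ?_
  rw [Fin.prod_univ_add (f := fun i : Fin (m+j) => letterP p (Fin.append a b i))]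
  simp [Fin.append_left, Fin.append_right]



lemma occursAt_iff {A : List Bool} {ξ : ℕ → Bool} {n : ℕ} :
    occursAt A ξ n ↔ A.length ≤ n ∧ ∀ k : Fin A.length,
      ξ (n - A.length + k) = A.get k := by
  constructor
  · rintro ⟨h1, h2⟩
    refine ⟨h1, fun k => ?_⟩
    rw [List.get_of_eq h2.symm k, List.get_ofFn]
    simp
  · rintro ⟨h1, h2⟩
    refine ⟨h1, ?_⟩
    apply List.ext_get (by simp)
    intro i hi hi2
    simp only [List.get_ofFn]
    simpa using h2 ⟨i, by simpa using hi2⟩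

lemma occursAt_congr {A : List Bool} {ξ η : ℕ → Bool} {n m : ℕ} (hnm : n ≤ m)
    (h : ∀ i < m, ξ i = η i) : occursAt A ξ n ↔ occursAt A η n := by
  rw [occursAt_iff, occursAt_iff]
  constructor <;> rintro ⟨h1, h2⟩ <;> refine ⟨h1, fun k => ?_⟩
  · rw [← h _ (by omega)]; exact h2 k
  · rw [h _ (by omega)]; exact h2 k

lemma le_hitTime {A : List Bool} {ξ : ℕ → Bool} : (A.length : ℕ∞) ≤ hitTime A ξ := by
  refine le_iInf fun n => le_iInf fun h => ?_
  exact_mod_cast h.1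

lemma hitTime_le {A : List Bool} {ξ : ℕ → Bool} {n : ℕ} (h : occursAt A ξ n) :
    hitTime A ξ ≤ n := by
  exact iInf_le_of_le n (iInf_le_of_le h le_rfl)

lemma lt_hitTime_iff {A : List Bool} {ξ : ℕ → Bool} {n : ℕ} :
    (n : ℕ∞) < hitTime A ξ ↔ ∀ m ≤ n, ¬ occursAt A ξ m := by
  constructor
  · intro h m hm hocc
    exact absurd (lt_of_lt_of_le h ((hitTime_le hocc).trans (by exact_mod_cast hm)))
      (lt_irrefl _)
  · intro h
    have : ((n : ℕ∞) + 1) ≤ hitTime A ξ := by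
      refine le_iInf fun m => le_iInf fun hm => ?_
      have : n < m := by by_contra hc; exact h m (by omega) hm
      calc (n : ℕ∞) + 1 = ((n + 1 : ℕ) : ℕ∞) := by push_cast; ring
        _ ≤ m := by exact_mod_cast this
    refine lt_of_lt_of_le ((ENat.lt_add_one_iff (by simp)).mpr le_rfl) this

lemma hitTime_eq_iff {A : List Bool} {ξ : ℕ → Bool} {n : ℕ} :
    hitTime A ξ = (n : ℕ∞) ↔ occursAt A ξ n ∧ ∀ m < n, ¬ occursAt A ξ m := by
  constructor
  · intro h
    classical
    by_cases hocc : ∃ m, occursAt A ξ m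
    · obtain ⟨m, hm⟩ := hocc
      have hfind := Nat.find_spec ⟨m, hm⟩ (p := fun m => occursAt A ξ m)
      set m₀ := Nat.find (⟨m, hm⟩ : ∃ m, occursAt A ξ m)
      have heq : hitTime A ξ = (m₀ : ℕ∞) := by
        refine le_antisymm (hitTime_le hfind) ?_
        refine le_iInf fun k => le_iInf fun hk => ?_
        exact_mod_cast Nat.find_min' _ hk
      rw [heq] at h
      have : m₀ = n := by exact_mod_cast h
      subst this
      exact ⟨hfind, fun k hk => Nat.find_min _ hk⟩
    · push_neg at hocc
      have : hitTime A ξ = ⊤ := by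
        simp only [hitTime]
        rw [iInf_eq_top]
        intro m; rw [iInf_eq_top]; exact fun hm => absurd hm (hocc m)
      rw [this] at h
      exact absurd h.symm (by simp)
  · rintro ⟨h1, h2⟩
    refine le_antisymm (hitTime_le h1) ?_
    refine le_iInf fun m => le_iInf fun hm => ?_
    have : n ≤ m := by by_contra hc; exact h2 m (by omega) hm
    exact_mod_cast this

lemma hitTime_eq_empty {A : List Bool} {ξ : ℕ → Bool} {n : ℕ} (hn : n < A.length) :
    hitTime A ξ ≠ (n : ℕ∞) := by
  intro h
  have := le_hitTime (A := A) (ξ := ξ)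
  rw [h] at this
  exact absurd (by exact_mod_cast this) (by omega)

/-- τ > n -/
def Hset (A : List Bool) (n : ℕ) : Set (ℕ → Bool) := {ξ | (n : ℕ∞) < hitTime A ξ}
/-- τ = n -/
def Eset (A : List Bool) (n : ℕ) : Set (ℕ → Bool) := {ξ | hitTime A ξ = (n : ℕ∞)}
/-- pattern written in positions n..n+l-1 -/
def Bset (A : List Bool) (n : ℕ) : Set (ℕ → Bool) :=
  {ξ | ∀ i : Fin A.length, ξ (n + i) = A.get i}
/-- suffix written after position n+k -/
def Cset (A : List Bool) (n k : ℕ) : Set (ℕ → Bool) :=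
  {ξ | ∀ i : Fin (A.drop k).length, ξ (n + k + i) = (A.drop k).get i}
def Dset (A : List Bool) (n k : ℕ) : Set (ℕ → Bool) :=
  if A.take k = A.drop (A.length - k) then Eset A (n + k) ∩ Cset A n k else ∅

lemma det_Hset (A : List Bool) (n : ℕ) : Det n (Hset A n) := by
  intro ξ η h
  simp only [Hset, Set.mem_setOf_eq, lt_hitTime_iff]
  exact ⟨fun H m hm ho => H m hm ((occursAt_congr hm h).2 ho),
    fun H m hm ho => H m hm ((occursAt_congr hm h).1 ho)⟩

lemma det_Eset (A : List Bool) (n : ℕ) : Det n (Eset A n) := by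
  intro ξ η h
  simp only [Eset, Set.mem_setOf_eq, hitTime_eq_iff]
  constructor
  · rintro ⟨h1, h2⟩
    exact ⟨(occursAt_congr le_rfl h).1 h1,
      fun m hm ho => h2 m hm ((occursAt_congr (le_of_lt hm) h).2 ho)⟩
  · rintro ⟨h1, h2⟩
    exact ⟨(occursAt_congr le_rfl h).2 h1,
      fun m hm ho => h2 m hm ((occursAt_congr (le_of_lt hm) h).1 ho)⟩

lemma decomp (A : List Bool) (hA : 1 ≤ A.length) (n : ℕ) :
    Hset A n ∩ Bset A n = ⋃ k ∈ Finset.Icc 1 A.length, Dset A n k := by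
  ext ξ
  simp only [Set.mem_inter_iff, Set.mem_iUnion, exists_prop, Finset.mem_Icc]
  constructor
  · rintro ⟨hH, hB⟩
    have hBc : ∀ i, (hi : i < A.length) → ξ (n + i) = A[i] := fun i hi => hB ⟨i, hi⟩
    have hocc : occursAt A ξ (n + A.length) := by
      rw [occursAt_iff]
      refine ⟨by omega, fun k => ?_⟩
      simp only [Nat.add_sub_cancel]
      exact hB k
    have hne : hitTime A ξ ≠ ⊤ := by
      intro h
      have := hitTime_le hocc
      rw [h, top_le_iff] at this
      exact (ENat.coe_ne_top _) this
    obtain ⟨t, ht⟩ : ∃ t : ℕ, (t : ℕ∞) = hitTime A ξ := by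
      lift hitTime A ξ to ℕ using hne with t ht
      exact ⟨t, rfl⟩
    have htle : t ≤ n + A.length := by
      have := hitTime_le hocc; rw [← ht] at this; exact_mod_cast this
    have htgt : n < t := by
      have := hH; rw [Hset, Set.mem_setOf_eq, ← ht] at this; exact_mod_cast this
    obtain ⟨hocct, hmin⟩ := hitTime_eq_iff.1 ht.symm
    have hlt : A.length ≤ t := hocct.1
    have hTc : ∀ j, (hj : j < A.length) → ξ (t - A.length + j) = A[j] := by
      intro j hj
      have := (occursAt_iff.1 hocct).2 ⟨j, hj⟩
      simpa using this
    set k := t - n with hk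
    have hk1 : 1 ≤ k := by omega
    have hkl : k ≤ A.length := by omega
    refine ⟨k, ⟨hk1, hkl⟩, ?_⟩
    have heq : A.take k = A.drop (A.length - k) := by
      apply List.ext_getElem (by simp; omega)
      intro i h1 h2
      rw [List.getElem_take, List.getElem_drop]
      simp only [List.length_take] at h1
      have hik : i < k := by omega
      have e1 : ξ (n + i) = A[i] := hBc i (by omega)
      have e2 : ξ (t - A.length + (A.length - k + i)) = A[A.length - k + i] :=
        hTc (A.length - k + i) (by omega)
      have harg : t - A.length + (A.length - k + i) = n + i := by omega
      rw [harg, e1] at e2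
      exact e2
    rw [Dset, if_pos heq]
    refine ⟨?_, ?_⟩
    · show hitTime A ξ = ((n + k : ℕ) : ℕ∞)
      rw [← ht]; congr 1; omega
    · intro i
      have hi : (i : ℕ) < (A.drop k).length := i.2
      have hi' : k + (i : ℕ) < A.length := by simp at hi; omega
      have : (A.drop k).get i = A[k + (i : ℕ)] := by
        simp only [List.get_eq_getElem, List.getElem_drop]
      rw [this, Nat.add_assoc]
      exact hBc (k + i) hi'
  · rintro ⟨k, ⟨hk1, hkl⟩, hD⟩
    rw [Dset] at hD
    by_cases heq : A.take k = A.drop (A.length - k)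
    swap
    · rw [if_neg heq] at hD; exact absurd hD (Set.notMem_empty ξ)
    rw [if_pos heq] at hD
    obtain ⟨hE, hC⟩ := hD
    have hE' : hitTime A ξ = ((n + k : ℕ) : ℕ∞) := hE
    obtain ⟨hocc, _⟩ := hitTime_eq_iff.1 hE'
    have hlnk : A.length ≤ n + k := hocc.1
    have hTc : ∀ j, (hj : j < A.length) → ξ (n + k - A.length + j) = A[j] := by
      intro j hj
      have := (occursAt_iff.1 hocc).2 ⟨j, hj⟩
      simpa using this
    have hpt : ∀ i, (hi : i < k) →
        A[i]'(by omega) = A[A.length - k + i]'(by omega) := by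
      intro i hi
      have := congrArg (fun L => L[i]?) heq
      simp only [List.getElem?_take, if_pos hi, List.getElem?_drop] at this
      rw [List.getElem?_eq_getElem (by omega), List.getElem?_eq_getElem (by omega)] at this
      exact Option.some.inj this
    constructor
    · show (n : ℕ∞) < hitTime A ξ
      rw [hE']
      exact_mod_cast by omega
    · intro i
      rcases lt_or_ge (i : ℕ) k with hik | hik
      · have e2 : ξ (n + k - A.length + (A.length - k + i)) =
            A[A.length - k + (i:ℕ)]'(by omega) :=
          hTc (A.length - k + i) (by omega)
        have harg : n + k - A.length + (A.length - k + (i:ℕ)) = n + i := by omega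
        rw [harg] at e2
        rw [List.get_eq_getElem, e2]
        exact (hpt i hik).symm
      · have hi2 : (i : ℕ) - k < (A.drop k).length := by simp; omega
        have := hC ⟨(i : ℕ) - k, hi2⟩
        simp only [List.get_eq_getElem, List.getElem_drop] at this ⊢
        have harg : n + k + ((i:ℕ) - k) = n + i := by omega
        rw [harg] at this
        rw [this]
        congr 1
        omega

lemma disj_Dset (A : List Bool) (n : ℕ) :
    (↑(Finset.Icc 1 A.length) : Set ℕ).PairwiseDisjoint (Dset A n) := by
  intro k _ k' _ hkk'
  simp only [Function.onFun, Set.disjoint_left]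
  intro ξ h1 h2
  rw [Dset] at h1 h2
  split_ifs at h1 h2
  · obtain ⟨hE1, _⟩ := h1
    obtain ⟨hE2, _⟩ := h2
    have hcast : ((n + k : ℕ) : ℕ∞) = ((n + k' : ℕ) : ℕ∞) := by
      rw [← hE1, ← hE2]
    have : n + k = n + k' := by exact_mod_cast hcast
    exact hkk' (by omega)
  · exact absurd h2 (Set.notMem_empty ξ)
  · exact absurd h1 (Set.notMem_empty ξ)
  · exact absurd h1 (Set.notMem_empty ξ)


/-- tail probability -/
def qR (μ : Measure (ℕ → Bool)) (A : List Bool) (n : ℕ) : ℝ := (μ (Hset A n)).toReal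
/-- hitting probability -/
def fR (μ : Measure (ℕ → Bool)) (A : List Bool) (n : ℕ) : ℝ := (μ (Eset A n)).toReal

section Meas
variable {p : ℝ} {μ : Measure (ℕ → Bool)} [IsProbabilityMeasure μ]
  (hμ : IsCoinMeasure p μ) (hp0 : 0 < p) (hp1 : p < 1)

lemma measurable_tailCyl (m j : ℕ) (b : Fin j → Bool) :
    MeasurableSet {ξ : ℕ → Bool | ∀ i : Fin j, ξ (m + i) = b i} := by
  have : {ξ : ℕ → Bool | ∀ i : Fin j, ξ (m + i) = b i}
      = ⋂ i : Fin j, (fun ξ : ℕ → Bool => ξ (m + i)) ⁻¹' {b i} := by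
    ext ξ; simp
  rw [this]
  exact MeasurableSet.iInter fun i =>
    (measurable_pi_apply _) (measurableSet_singleton _)

lemma measurable_Bset (A : List Bool) (n : ℕ) : MeasurableSet (Bset A n) :=
  measurable_tailCyl n A.length A.get

lemma measurable_Dset (A : List Bool) (n k : ℕ) : MeasurableSet (Dset A n k) := by
  rw [Dset]
  split_ifs
  · exact (det_measurable (det_Eset A (n + k))).inter
      (measurable_tailCyl (n + k) (A.drop k).length (A.drop k).get)
  · exact MeasurableSet.empty

include hμ hp0 hp1 in
lemma meas_HB (A : List Bool) (n : ℕ) :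
    μ (Hset A n ∩ Bset A n) = μ (Hset A n) * ENNReal.ofReal (strP p A) := by
  have := meas_inter_cyl hμ hp0 hp1 (det_Hset A n) A.length A.get
  rw [← strP_eq_prod] at this
  exact this

include hμ hp0 hp1 in
lemma meas_Dset (A : List Bool) (n k : ℕ) :
    μ (Dset A n k) = if A.take k = A.drop (A.length - k) then
      μ (Eset A (n + k)) * ENNReal.ofReal (strP p (A.drop k)) else 0 := by
  rw [Dset]
  split_ifs
  · have := meas_inter_cyl hμ hp0 hp1 (det_Eset A (n + k)) (A.drop k).length (A.drop k).get
    rw [← strP_eq_prod] at this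
    exact this
  · exact measure_empty

include hμ hp0 hp1 in
/-- The renewal identity (★). -/
lemma star (A : List Bool) (hA : 1 ≤ A.length) (n : ℕ) :
    qR μ A n * strP p A = ∑ k ∈ Finset.Icc 1 A.length,
      (if A.take k = A.drop (A.length - k) then (1 : ℝ) else 0) *
        strP p (A.drop k) * fR μ A (n + k) := by
  have hE : μ (Hset A n ∩ Bset A n) = ∑ k ∈ Finset.Icc 1 A.length, μ (Dset A n k) := by
    rw [decomp A hA n]
    exact measure_biUnion_finset (disj_Dset A n) (fun k _ => measurable_Dset A n k)
  rw [meas_HB hμ hp0 hp1 A n] at hE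
  have h1 : (μ (Hset A n) * ENNReal.ofReal (strP p A)).toReal
      = qR μ A n * strP p A := by
    rw [ENNReal.toReal_mul, ENNReal.toReal_ofReal (strP_pos hp0 hp1 A).le]
    rfl
  rw [← h1, hE, ENNReal.toReal_sum]
  · refine Finset.sum_congr rfl fun k _ => ?_
    rw [meas_Dset hμ hp0 hp1 A n k]
    split_ifs with h
    · rw [ENNReal.toReal_mul, ENNReal.toReal_ofReal (strP_pos hp0 hp1 (A.drop k)).le,
        one_mul]
      exact mul_comm _ _
    · simp
  · intro k _
    rw [meas_Dset hμ hp0 hp1 A n k]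
    split_ifs
    · exact ENNReal.mul_ne_top (measure_ne_top μ _) ENNReal.ofReal_ne_top
    · exact ENNReal.zero_ne_top

include hμ hp0 hp1 in
/-- The step inequality giving geometric decay. -/
lemma qR_step (A : List Bool) (hA : 1 ≤ A.length) (n : ℕ) :
    qR μ A (n + A.length) ≤ qR μ A n * (1 - strP p A) := by
  have hsub : Hset A (n + A.length) ⊆ Hset A n \ Bset A n := by
    intro ξ hξ
    have hξ' : ((n + A.length : ℕ) : ℕ∞) < hitTime A ξ := hξ
    constructor
    · show (n : ℕ∞) < hitTime A ξ
      refine lt_of_le_of_lt ?_ hξ'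
      exact_mod_cast Nat.le_add_right n A.length
    · intro hB
      have hocc : occursAt A ξ (n + A.length) := by
        rw [occursAt_iff]
        refine ⟨by omega, fun k => ?_⟩
        simp only [Nat.add_sub_cancel]
        exact hB k
      exact absurd (lt_of_lt_of_le hξ' (hitTime_le hocc)) (lt_irrefl _)
  have hdiff := measure_inter_add_diff (Hset A n) (measurable_Bset A n) (μ := μ)
  rw [meas_HB hμ hp0 hp1 A n] at hdiff
  have h2 : (μ (Hset A n \ Bset A n)).toReal
      = qR μ A n - qR μ A n * strP p A := by
    have hfin1 : μ (Hset A n) * ENNReal.ofReal (strP p A) ≠ ⊤ :=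
      ENNReal.mul_ne_top (measure_ne_top μ _) ENNReal.ofReal_ne_top
    have := congrArg ENNReal.toReal hdiff
    rw [ENNReal.toReal_add hfin1 (measure_ne_top μ _), ENNReal.toReal_mul,
      ENNReal.toReal_ofReal (strP_pos hp0 hp1 A).le] at this
    show (μ (Hset A n \ Bset A n)).toReal = (μ (Hset A n)).toReal - (μ (Hset A n)).toReal * strP p A
    linarith
  calc qR μ A (n + A.length) ≤ (μ (Hset A n \ Bset A n)).toReal :=
        ENNReal.toReal_mono (measure_ne_top μ _) (measure_mono hsub)
    _ = qR μ A n - qR μ A n * strP p A := h2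
    _ = qR μ A n * (1 - strP p A) := by ring

lemma qR_nonneg (A : List Bool) (n : ℕ) : 0 ≤ qR μ A n := ENNReal.toReal_nonneg

lemma qR_le_one (A : List Bool) (n : ℕ) : qR μ A n ≤ 1 := by
  have : (μ (Hset A n)).toReal ≤ (1 : ℝ≥0∞).toReal :=
    ENNReal.toReal_mono ENNReal.one_ne_top prob_le_one
  simpa [qR] using this

lemma qR_zero (A : List Bool) (hA : 1 ≤ A.length) : qR μ A 0 = 1 := by
  have : Hset A 0 = Set.univ := by
    ext ξ
    simp only [Hset, Set.mem_setOf_eq, Set.mem_univ, iff_true, Nat.cast_zero]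
    refine lt_of_lt_of_le ?_ (le_hitTime (A := A) (ξ := ξ))
    exact_mod_cast hA
  rw [qR, this, measure_univ, ENNReal.toReal_one]

lemma fR_succ (A : List Bool) (n : ℕ) :
    fR μ A (n + 1) = qR μ A n - qR μ A (n + 1) := by
  have hset : Hset A n = Eset A (n + 1) ∪ Hset A (n + 1) := by
    ext ξ
    simp only [Hset, Eset, Set.mem_setOf_eq, Set.mem_union]
    constructor
    · intro h
      have h1 : ((n : ℕ∞) + 1) ≤ hitTime A ξ := (ENat.add_one_le_iff (by simp)).2 h
      rcases eq_or_lt_of_le h1 with h2 | h2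
      · left; rw [← h2]; push_cast; ring
      · right
        have hc : ((n + 1 : ℕ) : ℕ∞) = (n : ℕ∞) + 1 := by push_cast; ring
        show ((n + 1 : ℕ) : ℕ∞) < hitTime A ξ
        rw [hc]; exact h2
    · rintro (h | h)
      · rw [h]; exact_mod_cast Nat.lt_succ_self n
      · refine lt_trans ?_ h
        exact_mod_cast Nat.lt_succ_self n
  have hdisj : Disjoint (Eset A (n + 1)) (Hset A (n + 1)) := by
    rw [Set.disjoint_left]
    intro ξ h1 h2
    have h1' : hitTime A ξ = ((n + 1 : ℕ) : ℕ∞) := h1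
    have h2' : ((n + 1 : ℕ) : ℕ∞) < hitTime A ξ := h2
    rw [h1'] at h2'
    exact absurd h2' (lt_irrefl _)
  have := measure_union hdisj (det_measurable (det_Hset A (n + 1))) (μ := μ)
  rw [← hset] at this
  have := congrArg ENNReal.toReal this
  rw [ENNReal.toReal_add (measure_ne_top μ _) (measure_ne_top μ _)] at this
  show (μ (Eset A (n+1))).toReal = (μ (Hset A n)).toReal - (μ (Hset A (n+1))).toReal
  rw [this]; ring

lemma fR_nonneg (A : List Bool) (n : ℕ) : 0 ≤ fR μ A n := ENNReal.toReal_nonneg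

lemma fR_eq_zero (A : List Bool) {n : ℕ} (hn : n < A.length) : fR μ A n = 0 := by
  have : Eset A n = ∅ := by
    ext ξ
    simp only [Eset, Set.mem_setOf_eq, Set.mem_empty_iff_false, iff_false]
    exact hitTime_eq_empty hn
  rw [fR, this, measure_empty, ENNReal.toReal_zero]

end Meas

/-- geometric-type summability for `r ^ (n / l)`. -/
lemma geom_div_summable {r : ℝ} (h0 : 0 < r) (h1 : r < 1) (l : ℕ) (hl : 1 ≤ l) :
    Summable (fun n : ℕ => r ^ (n / l)) := by
  have hρ0 : (0: ℝ) < r ^ ((l : ℝ)⁻¹) := Real.rpow_pos_of_pos h0 _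
  have hρ1 : r ^ ((l : ℝ)⁻¹) < 1 := Real.rpow_lt_one h0.le h1 (by positivity)
  refine Summable.of_nonneg_of_le (fun n => by positivity) (fun n => ?_)
    ((summable_geometric_of_lt_one hρ0.le hρ1).mul_left r⁻¹)
  have key : (n : ℝ) * (l : ℝ)⁻¹ - 1 ≤ ((n / l : ℕ) : ℝ) := by
    have h2 : n < (n / l + 1) * l := by
      calc n < l * (n / l) + l := by
            have := Nat.div_add_mod n l
            have := Nat.mod_lt n (show 0 < l by omega)
            omega
        _ = (n / l + 1) * l := by ring
    have h5 : (n : ℝ) < (((n / l : ℕ) : ℝ) + 1) * l := by exact_mod_cast h2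
    have hl0 : (0 : ℝ) < l := by exact_mod_cast hl
    rw [sub_le_iff_le_add]
    calc (n : ℝ) * (l : ℝ)⁻¹ ≤ ((((n / l : ℕ) : ℝ) + 1) * l) * (l : ℝ)⁻¹ := by
          apply mul_le_mul_of_nonneg_right h5.le (by positivity)
      _ = ((n / l : ℕ) : ℝ) + 1 := by field_simp
  calc r ^ (n / l) = r ^ (((n / l : ℕ) : ℝ)) := by rw [Real.rpow_natCast]
    _ ≤ r ^ ((n : ℝ) * (l : ℝ)⁻¹ - 1) :=
        Real.rpow_le_rpow_of_exponent_ge h0 h1.le key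
    _ = r⁻¹ * (r ^ ((l : ℝ)⁻¹)) ^ n := by
        rw [Real.rpow_sub h0, Real.rpow_one, ← Real.rpow_natCast (r ^ ((l:ℝ)⁻¹)) n,
          ← Real.rpow_mul h0.le]
        rw [div_eq_mul_inv, mul_comm]
        ring_nf


end TailAux

/-- For every `s ∈ [−1,1]`, the tail generating function
`Q_{τ_A}(s) = Σ_{n≥0} q_n s^n` satisfies
`Q_{τ_A}(s) ⬝ (P(A) s^l + (1−s) Σ_{k=1}^{l} [A_(k)=A^(k)] P(A^(l−k)) s^{l−k})
  = Σ_{k=1}^{l} [A_(k)=A^(k)] P(A^(l−k)) s^{l−k}`.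
(Here `Σ_{k=1}^{l} [A_(k)=A^(k)] P(A^(l−k)) s^{l−k} = w_A^A(s) = corrW p A A s`.) -/
theorem tail_pgf_identity (p : ℝ) (hp0 : 0 < p) (hp1 : p < 1)
    (μ : Measure (ℕ → Bool)) [IsProbabilityMeasure μ] (hμ : IsCoinMeasure p μ)
    (A : List Bool) (hA : 1 ≤ A.length) (s : ℝ) (hs : s ∈ Set.Icc (-1 : ℝ) 1) :
    (∑' n : ℕ, (μ {ξ | (n : ℕ∞) < hitTime A ξ}).toReal * s ^ n) *
        (strP p A * s ^ A.length + (1 - s) * corrW p A A s) =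
      corrW p A A s := by
  classical
  have hs1 : |s| ≤ 1 := abs_le.mpr ⟨hs.1, hs.2⟩
  have hP0 := TailAux.strP_pos hp0 hp1 A
  have hP1 := TailAux.strP_lt_one hp0 hp1 A hA
  set q : ℕ → ℝ := TailAux.qR μ A with hqdef
  set f : ℕ → ℝ := TailAux.fR μ A with hfdef
  have hgoalQ : (∑' n : ℕ, (μ {ξ | (n : ℕ∞) < hitTime A ξ}).toReal * s ^ n)
      = ∑' n : ℕ, q n * s ^ n := rfl
  rw [hgoalQ]
  have hq_step : ∀ n, q (n + A.length) ≤ q n * (1 - strP p A) :=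
    fun n => TailAux.qR_step hμ hp0 hp1 A hA n
  have hq0 : ∀ n, 0 ≤ q n := fun n => TailAux.qR_nonneg A n
  have hq1 : ∀ n, q n ≤ 1 := fun n => TailAux.qR_le_one A n
  have hr0 : 0 < 1 - strP p A := by linarith
  have hr1 : 1 - strP p A < 1 := by linarith
  have hbound : ∀ n, q n ≤ (1 - strP p A) ^ (n / A.length) := by
    intro n
    induction n using Nat.strong_induction_on with
    | _ n ih =>
      rcases lt_or_ge n A.length with h | h
      · rw [Nat.div_eq_of_lt h, pow_zero]; exact hq1 n
      · have hrec := hq_step (n - A.length)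
        have hn : n - A.length + A.length = n := by omega
        rw [hn] at hrec
        have hih := ih (n - A.length) (by omega)
        have hdiv : n / A.length = (n - A.length) / A.length + 1 :=
          Nat.div_eq_sub_div (by omega) h
        rw [hdiv, pow_succ]
        calc q n ≤ q (n - A.length) * (1 - strP p A) := hrec
          _ ≤ (1 - strP p A) ^ ((n - A.length) / A.length) * (1 - strP p A) :=
              mul_le_mul_of_nonneg_right hih hr0.le
  have hq_sum : Summable q :=
    Summable.of_nonneg_of_le hq0 hbound (TailAux.geom_div_summable hr0 hr1 A.length hA)
  have hg_sum : Summable (fun n => q n * s ^ n) := by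
    refine Summable.of_norm_bounded hq_sum (fun n => ?_)
    rw [norm_mul, norm_pow]
    calc ‖q n‖ * ‖s‖ ^ n ≤ ‖q n‖ * 1 :=
          mul_le_mul_of_nonneg_left (pow_le_one₀ (norm_nonneg s) hs1) (norm_nonneg _)
      _ = q n := by rw [mul_one, Real.norm_eq_abs, abs_of_nonneg (hq0 n)]
  have hfq : ∀ n, f (n + 1) = q n - q (n + 1) := fun n => TailAux.fR_succ A n
  have hshift : ∀ k : ℕ, Summable (fun n => q (n + k) * s ^ (n + k)) := fun k =>
    (summable_nat_add_iff (f := fun n => q n * s ^ n) k).2 hg_sum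
  have hfs_shift1 : (fun n => f (n + 1) * s ^ (n + 1))
      = fun n => q n * s ^ n * s - q (n + 1) * s ^ (n + 1) := by
    funext n; rw [hfq n]; ring
  have hf1_sum : Summable (fun n => f (n + 1) * s ^ (n + 1)) := by
    rw [hfs_shift1]
    exact (hg_sum.mul_right s).sub (hshift 1)
  have hf_sum : Summable (fun n => f n * s ^ n) :=
    (summable_nat_add_iff (f := fun n => f n * s ^ n) 1).1 hf1_sum
  have hq00 : q 0 = 1 := TailAux.qR_zero A hA
  have htail : ∑' n : ℕ, q (n + 1) * s ^ (n + 1) = (∑' n : ℕ, q n * s ^ n) - 1 := by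
    have h := Summable.sum_add_tsum_nat_add (f := fun n => q n * s ^ n) 1 hg_sum
    simp only [Finset.range_one, Finset.sum_singleton, pow_zero, mul_one, hq00] at h
    linarith
  have hF : (∑' n : ℕ, f n * s ^ n) = 1 - (1 - s) * (∑' n : ℕ, q n * s ^ n) := by
    rw [Summable.tsum_eq_zero_add hf_sum]
    have hf0 : f 0 = 0 := TailAux.fR_eq_zero A (by omega)
    rw [hf0, hfs_shift1, Summable.tsum_sub (hg_sum.mul_right s) (hshift 1), tsum_mul_right,
      htail]
    ring
  have hstar : ∀ n, q n * strP p A = ∑ k ∈ Finset.Icc 1 A.length,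
      (if A.take k = A.drop (A.length - k) then (1 : ℝ) else 0) *
        strP p (A.drop k) * f (n + k) :=
    fun n => TailAux.star hμ hp0 hp1 A hA n
  have hpt : ∀ n, q n * s ^ n * (strP p A * s ^ A.length)
      = ∑ k ∈ Finset.Icc 1 A.length,
          (if A.take k = A.drop (A.length - k) then (1 : ℝ) else 0) * strP p (A.drop k)
            * s ^ (A.length - k) * (f (n + k) * s ^ (n + k)) := by
    intro n
    have h1 : q n * s ^ n * (strP p A * s ^ A.length)
        = (q n * strP p A) * (s ^ n * s ^ A.length) := by ring
    rw [h1, hstar n, Finset.sum_mul]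
    refine Finset.sum_congr rfl fun k hk => ?_
    obtain ⟨hk1, hk2⟩ := Finset.mem_Icc.1 hk
    have hsplit : s ^ n * s ^ A.length = s ^ (n + k) * s ^ (A.length - k) := by
      rw [← pow_add, ← pow_add]; congr 1; omega
    rw [hsplit]; ring
  have hTsum : ∀ k ∈ Finset.Icc 1 A.length, Summable (fun n =>
      (if A.take k = A.drop (A.length - k) then (1 : ℝ) else 0) * strP p (A.drop k)
        * s ^ (A.length - k) * (f (n + k) * s ^ (n + k))) := by
    intro k _
    exact ((summable_nat_add_iff (f := fun n => f n * s ^ n) k).2 hf_sum).mul_left _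
  have hfshift : ∀ k ∈ Finset.Icc 1 A.length,
      (∑' n : ℕ, f (n + k) * s ^ (n + k)) = ∑' n : ℕ, f n * s ^ n := by
    intro k hk
    obtain ⟨hk1, hk2⟩ := Finset.mem_Icc.1 hk
    have h := Summable.sum_add_tsum_nat_add (f := fun n => f n * s ^ n) k hf_sum
    have hz : ∑ i ∈ Finset.range k, f i * s ^ i = 0 := by
      refine Finset.sum_eq_zero fun i hi => ?_
      have : f i = 0 := TailAux.fR_eq_zero A ((Finset.mem_range.1 hi).trans_le hk2)
      rw [this, zero_mul]
    rw [hz, zero_add] at h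
    exact h
  have hmain : (∑' n : ℕ, q n * s ^ n) * (strP p A * s ^ A.length)
      = corrW p A A s * (∑' n : ℕ, f n * s ^ n) := by
    rw [← tsum_mul_right]
    calc ∑' n : ℕ, q n * s ^ n * (strP p A * s ^ A.length)
        = ∑' n : ℕ, ∑ k ∈ Finset.Icc 1 A.length,
            (if A.take k = A.drop (A.length - k) then (1 : ℝ) else 0) * strP p (A.drop k)
              * s ^ (A.length - k) * (f (n + k) * s ^ (n + k)) := tsum_congr hpt
      _ = ∑ k ∈ Finset.Icc 1 A.length, ∑' n : ℕ,
            (if A.take k = A.drop (A.length - k) then (1 : ℝ) else 0) * strP p (A.drop k)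
              * s ^ (A.length - k) * (f (n + k) * s ^ (n + k)) := Summable.tsum_finsetSum hTsum
      _ = ∑ k ∈ Finset.Icc 1 A.length,
            (if A.take k = A.drop (A.length - k) then (1 : ℝ) else 0) * strP p (A.drop k)
              * s ^ (A.length - k) * (∑' n : ℕ, f n * s ^ n) := by
            refine Finset.sum_congr rfl fun k hk => ?_
            rw [tsum_mul_left, hfshift k hk]
      _ = corrW p A A s * (∑' n : ℕ, f n * s ^ n) := by
            rw [corrW, min_self, Finset.sum_mul]
  linear_combination hmain + corrW p A A s * hF
end
end
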